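/- arXiv:2012.15669 — 6 statements merged into one kernel-verified Lean document; each statement's English description precedes it below -/
import Mathlib

section
/- Let K be a number field of degree n with an integral basis ω. Then there exist an 𝓞_K^×-fundamental domain 𝒟 ⊆ 𝓞_K∖{0} and a constant C > 0 such that C·‖α‖_{∞,ω}ⁿ ≤ 𝐍(α) for every α ∈ 𝒟; that is, there exists an NL-compatible 𝓞_K^×-fundamental domain. -/
open NumberField

/-- The `ℓ∞`-length `‖x‖_{∞,ω} = maxᵢ |aᵢ|` of `x = ∑ᵢ aᵢ ωᵢ`. -/
noncomputable def lInftyLen {K : Type*} [Field K] [NumberField K] {ι : Type*} [Fintype ι]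
    (ω : Module.Basis ι ℤ (RingOfIntegers K)) (x : RingOfIntegers K) : ℕ :=
  Finset.univ.sup fun i => (ω.repr x i).natAbs

open NumberField.mixedEmbedding NumberField.InfinitePlace
open NumberField.mixedEmbedding.fundamentalCone Finset Matrix

theorem coneBound (K : Type*) [Field K] [NumberField K] :
    ∃ c : ℝ, 0 < c ∧ ∀ x ∈ fundamentalCone K, ∀ w : InfinitePlace K,
      normAtPlace w x ≤ c * (mixedEmbedding.norm x) ^ ((Module.finrank ℚ K : ℝ)⁻¹) := by
  classical
  set n := Module.finrank ℚ K with hn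
  have hn0 : 0 < n := Module.finrank_pos
  obtain ⟨R, hR⟩ := (ZSpan.fundamentalDomain_isBounded
      ((NumberField.Units.basisUnitLattice K).ofZLatticeBasis ℝ _)).exists_norm_le
  refine ⟨Real.exp (|R| * n), Real.exp_pos _, fun x hx w => ?_⟩
  have hN : 0 < mixedEmbedding.norm x := norm_pos_of_mem hx
  set t : ℝ := (mixedEmbedding.norm x) ^ ((n : ℝ)⁻¹) with ht
  have htpos : 0 < t := Real.rpow_pos_of_pos hN _
  have hlogt : Real.log t = Real.log (mixedEmbedding.norm x) * (n : ℝ)⁻¹ := by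
    rw [ht, Real.log_rpow hN, mul_comm]
  have hnap : ∀ w : InfinitePlace K, 0 < normAtPlace w x :=
    normAtPlace_pos_of_mem hx
  -- bound on places ≠ w₀
  have key : ∀ w : {w : InfinitePlace K // w ≠ NumberField.Units.dirichletUnitTheorem.w₀},
      |Real.log (normAtPlace w.1 x) - Real.log t| ≤ |R| := by
    intro w
    have h1 : ‖NumberField.mixedEmbedding.logMap x‖ ≤ R := hR _ hx.1
    have h2 : |NumberField.mixedEmbedding.logMap x w| ≤ ‖NumberField.mixedEmbedding.logMap x‖ := by
      have := norm_le_pi_norm (NumberField.mixedEmbedding.logMap x) w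
      rwa [Real.norm_eq_abs] at this
    have h3 : |NumberField.mixedEmbedding.logMap x w| ≤ |R| :=
      le_trans h2 (le_trans h1 (le_abs_self R))
    rw [logMap_apply, abs_mul] at h3
    have hm : (1 : ℝ) ≤ mult w.1 := one_le_mult
    calc |Real.log (normAtPlace w.1 x) - Real.log t|
        = 1 * |Real.log (normAtPlace w.1 x) - Real.log (mixedEmbedding.norm x) * (n:ℝ)⁻¹| := by
          rw [one_mul, hlogt]
      _ ≤ |(mult w.1 : ℝ)| * |Real.log (normAtPlace w.1 x) - Real.log (mixedEmbedding.norm x) * (n:ℝ)⁻¹| := by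
          apply mul_le_mul_of_nonneg_right _ (abs_nonneg _)
          rw [abs_of_nonneg (by positivity : (0:ℝ) ≤ (mult w.1 : ℝ))]
          exact hm
      _ ≤ |R| := h3
  have upper : ∀ w : InfinitePlace K, w ≠ NumberField.Units.dirichletUnitTheorem.w₀ →
      normAtPlace w x ≤ Real.exp |R| * t := by
    intro w hw
    have := (abs_le.mp (key ⟨w, hw⟩)).2
    have : Real.log (normAtPlace w x) ≤ |R| + Real.log t := by linarith
    calc normAtPlace w x = Real.exp (Real.log (normAtPlace w x)) := (Real.exp_log (hnap w)).symm
      _ ≤ Real.exp (|R| + Real.log t) := Real.exp_le_exp.mpr this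
      _ = Real.exp |R| * t := by rw [Real.exp_add, Real.exp_log htpos]
  have lower : ∀ w : InfinitePlace K, w ≠ NumberField.Units.dirichletUnitTheorem.w₀ →
      Real.exp (-|R|) * t ≤ normAtPlace w x := by
    intro w hw
    have := (abs_le.mp (key ⟨w, hw⟩)).1
    have : -|R| + Real.log t ≤ Real.log (normAtPlace w x) := by linarith
    calc Real.exp (-|R|) * t = Real.exp (-|R| + Real.log t) := by
          rw [Real.exp_add, Real.exp_log htpos]
      _ ≤ Real.exp (Real.log (normAtPlace w x)) := Real.exp_le_exp.mpr this
      _ = normAtPlace w x := Real.exp_log (hnap w)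
  -- final
  by_cases hw : w ≠ NumberField.Units.dirichletUnitTheorem.w₀
  · refine le_trans (upper w hw) (mul_le_mul_of_nonneg_right ?_ htpos.le)
    apply Real.exp_le_exp.mpr
    nlinarith [abs_nonneg R, (Nat.one_le_cast (α := ℝ)).mpr hn0]
  · push_neg at hw
    subst hw
    set w0 := NumberField.Units.dirichletUnitTheorem.w₀ (K := K) with hw0
    set m0 := mult w0 with hm0
    set S := ∑ w ∈ univ.erase w0, mult w with hSdef
    have hS : m0 + S = n := by
      rw [hn, ← sum_mult_eq (K := K)]
      exact Finset.add_sum_erase univ mult (mem_univ w0)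
    have htn : t ^ n = mixedEmbedding.norm x := by
      rw [ht, ← Real.rpow_natCast (mixedEmbedding.norm x ^ ((n : ℝ)⁻¹)) n,
        ← Real.rpow_mul hN.le, inv_mul_cancel₀ (by exact_mod_cast hn0.ne'), Real.rpow_one]
    have hBpos : 0 < (Real.exp (-|R|) * t) ^ S := by positivity
    have hAB : (normAtPlace w0 x) ^ m0 * (Real.exp (-|R|) * t) ^ S ≤ t ^ n := by
      rw [htn, mixedEmbedding.norm_apply, ← Finset.mul_prod_erase univ _ (mem_univ w0)]
      refine mul_le_mul_of_nonneg_left ?_ (pow_nonneg (normAtPlace_nonneg w0 x) m0)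
      rw [← Finset.prod_pow_eq_pow_sum]
      exact Finset.prod_le_prod (fun i _ => by positivity)
        (fun i hi => pow_le_pow_left₀ (by positivity)
          (lower i (Finset.ne_of_mem_erase hi)) _)
    have hA : (normAtPlace w0 x) ^ m0 ≤ (Real.exp (|R| * n) * t) ^ m0 := by
      refine le_trans ((le_div_iff₀ hBpos).mpr hAB) ?_
      have e1 : t ^ n / (Real.exp (-|R|) * t) ^ S = t ^ m0 * Real.exp |R| ^ S := by
        rw [← hS, pow_add, mul_pow, Real.exp_neg, inv_pow]
        field_simp
      rw [e1, mul_pow, mul_comm ((Real.exp (|R| * n)) ^ m0) (t ^ m0)]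
      refine mul_le_mul_of_nonneg_left ?_ (by positivity)
      rw [← Real.exp_nat_mul, ← Real.exp_nat_mul]
      apply Real.exp_le_exp.mpr
      have hc1 : (S : ℝ) ≤ (n : ℝ) := by exact_mod_cast (le_of_add_le_right hS.le)
      have hc2 : (1 : ℝ) ≤ (m0 : ℝ) := by exact_mod_cast mult_pos
      have hc3 : (0 : ℝ) ≤ |R| := abs_nonneg R
      have hc4 : (0:ℝ) ≤ (n:ℝ) := Nat.cast_nonneg n
      nlinarith [mul_le_mul_of_nonneg_right hc1 hc3,
        mul_nonneg (mul_nonneg (sub_nonneg.mpr hc2) hc3) hc4]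
    exact le_of_pow_le_pow_left₀ mult_ne_zero (by positivity) hA

theorem coeffBound {K : Type*} [Field K] [NumberField K] {ι : Type*} [Fintype ι]
    (ω : Module.Basis ι ℤ (RingOfIntegers K)) :
    ∃ c : ℝ, 0 < c ∧ ∀ (β : RingOfIntegers K) (r : ℝ),
      (∀ w : InfinitePlace K, w (algebraMap (RingOfIntegers K) K β) ≤ r) →
      ∀ i, |((ω.repr β i : ℤ) : ℝ)| ≤ c * r := by
  classical
  set bQ : Module.Basis ι ℚ K :=
    Module.Basis.localizationLocalization ℚ (nonZeroDivisors ℤ) K ω with hbQ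
  have hbQa : ∀ i, bQ i = algebraMap (RingOfIntegers K) K (ω i) := fun i =>
    Module.Basis.localizationLocalization_apply ℚ (nonZeroDivisors ℤ) K ω i
  have hcard : Fintype.card ι = Module.finrank ℚ K :=
    (Module.finrank_eq_card_basis bQ).symm
  have e : ι ≃ (K →ₐ[ℚ] ℂ) :=
    Fintype.equivOfCardEq (by rw [hcard, AlgHom.card])
  set M : Matrix ι ι ℂ := Algebra.embeddingsMatrixReindex ℚ ℂ (fun i => bQ i) e with hM
  have hMe : ∀ k j, M k j = e j (algebraMap (RingOfIntegers K) K (ω k)) := by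
    intro k j
    rw [hM, Algebra.embeddingsMatrixReindex, Matrix.reindex_apply, Matrix.submatrix_apply,
      Equiv.refl_symm, Equiv.refl_apply, Equiv.symm_symm, Algebra.embeddingsMatrix_apply, hbQa]
  have hdet : IsUnit M.det := by
    have h1 : Algebra.discr ℚ bQ ≠ 0 := Algebra.discr_not_zero_of_basis ℚ bQ
    have h2 := Algebra.discr_eq_det_embeddingsMatrixReindex_pow_two ℚ ℂ bQ e
    rw [isUnit_iff_ne_zero]
    intro h
    rw [← hM, h] at h2
    have h3 : algebraMap ℚ ℂ (Algebra.discr ℚ bQ) = 0 := by rw [h2]; ring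
    exact h1 ((map_eq_zero_iff _ (algebraMap ℚ ℂ).injective).mp h3)
  have hdetT : IsUnit (M.transpose).det := by rwa [Matrix.det_transpose]
  set N : Matrix ι ι ℂ := (M.transpose)⁻¹ with hNdef
  refine ⟨(∑ i, ∑ j, ‖N i j‖) + 1, by positivity, fun β r hr i => ?_⟩
  have hr0 : 0 ≤ r := le_trans (apply_nonneg _ _) (hr Classical.ofNonempty)
  set a : ι → ℂ := fun i => ((ω.repr β i : ℤ) : ℂ) with ha
  set v : ι → ℂ := fun j => e j (algebraMap (RingOfIntegers K) K β) with hv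
  have hkey : M.transpose.mulVec a = v := by
    ext j
    rw [hv]
    simp only [Matrix.mulVec, Matrix.transpose_apply, dotProduct]
    have hβ : (algebraMap (RingOfIntegers K) K β) =
        ∑ k, (ω.repr β k : ℤ) • algebraMap (RingOfIntegers K) K (ω k) := by
      conv_lhs => rw [← ω.sum_repr β]
      rw [map_sum]
      exact Finset.sum_congr rfl fun k _ => map_zsmul _ _ _
    rw [hβ, map_sum]
    refine Finset.sum_congr rfl fun k _ => ?_
    rw [map_zsmul]
    show M k j * a k = _
    rw [hMe k j, ha, zsmul_eq_mul]
    ring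
  have haeq : a = N.mulVec v := by
    rw [hNdef, ← hkey, Matrix.mulVec_mulVec, Matrix.nonsing_inv_mul _ hdetT, Matrix.one_mulVec]
  have hvb : ∀ j, ‖v j‖ ≤ r := by
    intro j
    have := hr (InfinitePlace.mk ((e j : K →ₐ[ℚ] ℂ) : K →+* ℂ))
    rwa [InfinitePlace.apply] at this
  clear_value N
  clear hNdef hkey hdet hdetT hMe hM
  have habs : |((ω.repr β i : ℤ) : ℝ)| = ‖a i‖ := by
    rw [ha]; simp [Complex.norm_intCast]
  rw [habs, haeq]
  calc ‖(N.mulVec v) i‖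
      ≤ ∑ j, ‖N i j * v j‖ := by
        simp only [Matrix.mulVec, dotProduct]
        exact norm_sum_le _ _
    _ ≤ ∑ j, ‖N i j‖ * r := by
        refine Finset.sum_le_sum fun j _ => ?_
        rw [norm_mul]
        exact mul_le_mul_of_nonneg_left (hvb j) (norm_nonneg _)
    _ = (∑ j, ‖N i j‖) * r := by rw [← Finset.sum_mul]
    _ ≤ ((∑ i, ∑ j, ‖N i j‖) + 1) * r := by
        refine mul_le_mul_of_nonneg_right ?_ hr0
        have h4 : (∑ j, ‖N i j‖) ≤ ∑ i', ∑ j, ‖N i' j‖ :=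
          Finset.single_le_sum (fun k _ => Finset.sum_nonneg fun j _ => norm_nonneg _)
            (mem_univ i)
        linarith

/-- **Existence of an NL-compatible `𝓞_K^×`-fundamental domain.**
There is a fundamental domain `D` for the multiplication action of the unit group on
`𝓞_K ∖ {0}` together with a constant `C > 0` such that `C·‖α‖_{∞,ω}ⁿ ≤ 𝐍(α)` on `D`. -/
theorem exists_NL_compatible_fundamental_domain
    {K : Type*} [Field K] [NumberField K]
    {ι : Type*} [Fintype ι] (ω : Module.Basis ι ℤ (RingOfIntegers K)) :
    ∃ D : Set (RingOfIntegers K),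
      (∀ α ∈ D, α ≠ 0) ∧
      (∀ α : RingOfIntegers K, α ≠ 0 →
        ∃! η : (RingOfIntegers K)ˣ,
          ((η⁻¹ : (RingOfIntegers K)ˣ) : RingOfIntegers K) * α ∈ D) ∧
      ∃ C : ℝ, 0 < C ∧
        ∀ α ∈ D,
          C * (lInftyLen ω α : ℝ) ^ Fintype.card ι ≤ ((Algebra.norm ℤ α).natAbs : ℝ) := by
  classical
  letI s : Setoid (RingOfIntegers K) := MulAction.orbitRel (RingOfIntegers K)ˣ (RingOfIntegers K)
  have hcard : Fintype.card ι = Module.finrank ℚ K :=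
    (Module.finrank_eq_card_basis (Module.Basis.localizationLocalization ℚ (nonZeroDivisors ℤ) K ω)).symm
  set n := Fintype.card ι with hn
  have hn0 : 0 < n := hcard ▸ Module.finrank_pos
  have hι : Nonempty ι := Fintype.card_pos_iff.mp hn0
  -- the pick function
  have hpick : ∀ q : Quotient s, ∃ β : RingOfIntegers K, Quotient.mk s β = q ∧
      (β = 0 ∨ mixedEmbedding K (β : K) ∈ fundamentalCone K) := by
    intro q
    obtain ⟨α, rfl⟩ := Quotient.exists_rep q
    by_cases hα : α = 0
    · exact ⟨α, rfl, Or.inl hα⟩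
    · have hα' : (α : K) ≠ 0 := by
        simpa using hα
      have hnorm : mixedEmbedding.norm (mixedEmbedding K (α : K)) ≠ 0 := by
        rw [norm_eq_norm]
        simp only [ne_eq, Rat.cast_eq_zero, abs_eq_zero]
        exact fun h => hα' (Algebra.norm_eq_zero_iff.mp (by exact_mod_cast h))
      obtain ⟨u, hu⟩ := exists_unit_smul_mem hnorm
      refine ⟨u * α, Quotient.sound ⟨u, rfl⟩, Or.inr ?_⟩
      rwa [show mixedEmbedding K ((↑(u * α) : K)) = u • mixedEmbedding K (α : K) from
        (unit_smul_eq_iff_mul_eq.mpr rfl).symm]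
  set pick : Quotient s → RingOfIntegers K := fun q => (hpick q).choose with hpickdef
  have pick_mk : ∀ q, Quotient.mk s (pick q) = q := fun q => (hpick q).choose_spec.1
  have pick_cone : ∀ q, pick q = 0 ∨ mixedEmbedding K ((pick q : K)) ∈ fundamentalCone K :=
    fun q => (hpick q).choose_spec.2
  refine ⟨{β | β ≠ 0 ∧ pick (Quotient.mk s β) = β}, fun α hα => hα.1, ?_, ?_⟩
  · -- fundamental domain property
    intro α hα
    obtain ⟨u, hu⟩ : ∃ u : (RingOfIntegers K)ˣ, (u : RingOfIntegers K) * α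
        = pick (Quotient.mk s α) := by
      have := Quotient.exact (pick_mk (Quotient.mk s α))
      obtain ⟨u, hu⟩ := this
      exact ⟨u, hu⟩
    have hβne : pick (Quotient.mk s α) ≠ 0 := by
      rw [← hu]
      exact mul_ne_zero (Units.ne_zero u) hα
    refine ⟨u⁻¹, ?_, ?_⟩
    · refine ⟨by rw [inv_inv, hu]; exact hβne, ?_⟩
      rw [inv_inv, hu]
      have : Quotient.mk s (pick (Quotient.mk s α)) = Quotient.mk s α := pick_mk _
      rw [this]
    · intro η hη
      have h1 : Quotient.mk s ((η⁻¹ : (RingOfIntegers K)ˣ) * α) = Quotient.mk s α :=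
        Quotient.sound ⟨η⁻¹, rfl⟩
      have h2 := hη.2
      rw [h1] at h2
      -- h2 : pick (mk α) = η⁻¹ * α
      have h3 : ((η⁻¹ : (RingOfIntegers K)ˣ) : RingOfIntegers K) * α
          = (u : RingOfIntegers K) * α := by rw [← h2, hu]
      have h4 : ((η⁻¹ : (RingOfIntegers K)ˣ) : RingOfIntegers K) = u := mul_right_cancel₀ hα h3
      have : η⁻¹ = u := Units.ext h4
      rw [← this, inv_inv]
  · -- the norm inequality
    obtain ⟨cA, hcA, hA⟩ := coneBound K
    obtain ⟨cB, hcB, hB⟩ := coeffBound ω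
    refine ⟨((cB * cA) ^ n)⁻¹, by positivity, fun α hα => ?_⟩
    obtain ⟨hα0, hαpick⟩ := hα
    have hcone : mixedEmbedding K (α : K) ∈ fundamentalCone K := by
      rcases pick_cone (Quotient.mk s α) with h | h
      · exact absurd (hαpick ▸ h) hα0
      · rwa [hαpick] at h
    set N : ℝ := mixedEmbedding.norm (mixedEmbedding K (α : K)) with hNdef
    have hNval : N = ((Algebra.norm ℤ α).natAbs : ℝ) := by
      rw [hNdef, norm_eq_norm, ← Algebra.coe_norm_int]
      rw [Nat.cast_natAbs]
      push_cast
      rfl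
    have hNpos : 0 < N := norm_pos_of_mem hcone
    have hplace : ∀ w : InfinitePlace K, w (algebraMap (RingOfIntegers K) K α)
        ≤ cA * N ^ ((n : ℝ)⁻¹) := by
      intro w
      have := hA _ hcone w
      rw [normAtPlace_apply] at this
      rw [← hcard] at this
      exact this
    have hcoeff := hB α _ hplace
    have hlen : ((lInftyLen ω α : ℕ) : ℝ) ≤ cB * (cA * N ^ ((n : ℝ)⁻¹)) := by
      obtain ⟨i₀, hi₀⟩ := Finset.exists_mem_eq_sup Finset.univ univ_nonempty
        (fun i => (ω.repr α i).natAbs)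
      rw [lInftyLen, hi₀.2]
      calc (((ω.repr α i₀).natAbs : ℕ) : ℝ) = |((ω.repr α i₀ : ℤ) : ℝ)| := by
            rw [Nat.cast_natAbs, Int.cast_abs]
        _ ≤ cB * (cA * N ^ ((n : ℝ)⁻¹)) := hcoeff i₀
    have hrpow : (N ^ ((n : ℝ)⁻¹)) ^ n = N := by
      rw [← Real.rpow_natCast (N ^ ((n:ℝ)⁻¹)) n, ← Real.rpow_mul hNpos.le,
        inv_mul_cancel₀ (by exact_mod_cast hn0.ne'), Real.rpow_one]
    have hfin : ((lInftyLen ω α : ℕ) : ℝ) ^ n ≤ (cB * cA) ^ n * N := by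
      calc ((lInftyLen ω α : ℕ) : ℝ) ^ n ≤ (cB * cA * N ^ ((n : ℝ)⁻¹)) ^ n := by
            apply pow_le_pow_left₀ (Nat.cast_nonneg _)
            rw [mul_assoc]
            exact hlen
        _ = (cB * cA) ^ n * N := by rw [mul_pow, hrpow]
    rw [← hNval]
    calc ((cB * cA) ^ n)⁻¹ * ((lInftyLen ω α : ℕ) : ℝ) ^ n
        ≤ ((cB * cA) ^ n)⁻¹ * ((cB * cA) ^ n * N) :=
          mul_le_mul_of_nonneg_left hfin (by positivity)
      _ = N := by
          rw [← mul_assoc, inv_mul_cancel₀ (by positivity), one_mul]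
end

section
/- Let K be a number field whose unit group 𝓞_K^× is infinite, and let S ⊆ 𝓞_K be a finite subset with #S ≥ 3. Then there exists an 𝓞_K^×-fundamental domain 𝒟 ⊆ 𝓞_K∖{0} containing no S-constellation: there do not exist α ∈ 𝓞_K and a positive integer k with α + k·s ∈ 𝒟 for all s ∈ S. -/
set_option linter.unusedSectionVars false

open NumberField

section Aux

variable {K : Type*} [Field K] [NumberField K]
variable (φ : K →+* ℂ) (C : ℝ) (e : ℕ → 𝓞 K)
  (hex : ∀ (n : ℕ) (B : ℝ), ∃ β : 𝓞 K,
    (∃ η : (𝓞 K)ˣ, β = (η : 𝓞 K) * e n) ∧ B ≤ ‖φ (algebraMap (𝓞 K) K β)‖)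

/-- Running sum of norms of the chosen representatives. -/
noncomputable def gA : ℕ → ℝ
  | 0 => 0
  | n + 1 => gA n + ‖φ (algebraMap (𝓞 K) K (hex n (C * (1 + gA n))).choose)‖

/-- The representative chosen for the `n`-th orbit. -/
noncomputable def rA (n : ℕ) : 𝓞 K := (hex n (C * (1 + gA φ C e hex n))).choose

lemma rA_orbit (n : ℕ) : ∃ η : (𝓞 K)ˣ, rA φ C e hex n = (η : 𝓞 K) * e n :=
  (hex n (C * (1 + gA φ C e hex n))).choose_spec.1

lemma rA_norm (n : ℕ) :
    C * (1 + gA φ C e hex n) ≤ ‖φ (algebraMap (𝓞 K) K (rA φ C e hex n))‖ :=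
  (hex n (C * (1 + gA φ C e hex n))).choose_spec.2

lemma gA_succ (n : ℕ) :
    gA φ C e hex (n + 1) = gA φ C e hex n + ‖φ (algebraMap (𝓞 K) K (rA φ C e hex n))‖ :=
  rfl

lemma gA_nonneg (n : ℕ) : 0 ≤ gA φ C e hex n := by
  induction n with
  | zero => simp [gA]
  | succ n ih =>
    rw [gA_succ]
    have := norm_nonneg (φ (algebraMap (𝓞 K) K (rA φ C e hex n)))
    linarith

lemma gA_mono : Monotone (gA φ C e hex) := by
  apply monotone_nat_of_le_succ
  intro n
  rw [gA_succ]
  have := norm_nonneg (φ (algebraMap (𝓞 K) K (rA φ C e hex n)))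
  linarith

lemma gA_ge {m₁ m₂ n : ℕ} (h1 : m₁ < m₂) (h2 : m₂ < n) :
    ‖φ (algebraMap (𝓞 K) K (rA φ C e hex m₁))‖ +
      ‖φ (algebraMap (𝓞 K) K (rA φ C e hex m₂))‖ ≤ gA φ C e hex n := by
  have e1 := gA_succ φ C e hex m₁
  have e2 := gA_succ φ C e hex m₂
  have h3 : gA φ C e hex (m₂ + 1) ≤ gA φ C e hex n := gA_mono φ C e hex h2
  have h4 : gA φ C e hex (m₁ + 1) ≤ gA φ C e hex m₂ := gA_mono φ C e hex h1
  have h5 := gA_nonneg φ C e hex m₁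
  linarith

end Aux

/-- **Existence of a bad fundamental domain.** If the unit group of `𝓞_K` is infinite and
`S ⊆ 𝓞_K` is finite with `#S ≥ 3`, then there is an `𝓞_K^×`-fundamental domain containing no
`S`-constellation. -/
theorem exists_fundamental_domain_without_constellations
    {K : Type*} [Field K] [NumberField K]
    (hinf : Infinite (RingOfIntegers K)ˣ)
    (S : Finset (RingOfIntegers K)) (hS : 3 ≤ S.card) :
    ∃ D : Set (RingOfIntegers K),
      (∀ α ∈ D, α ≠ 0) ∧
      (∀ α : RingOfIntegers K, α ≠ 0 →
        ∃! η : (RingOfIntegers K)ˣ,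
          ((η⁻¹ : (RingOfIntegers K)ˣ) : RingOfIntegers K) * α ∈ D) ∧
      ¬∃ (α : RingOfIntegers K) (k : ℕ), 0 < k ∧ ∀ s ∈ S, α + k • s ∈ D := by
  classical
  -- the coercion ring hom
  set ψ := algebraMap (𝓞 K) K with hψ
  -- a unit of infinite order
  have hUnt : ∃ u : (𝓞 K)ˣ, ¬ IsOfFinOrder u := by
    by_contra h
    push_neg at h
    have hinj : Function.Injective
        (fun u : (𝓞 K)ˣ => (⟨u, (CommGroup.mem_torsion u).mpr (h u)⟩ :
          NumberField.Units.torsion K)) := fun a b hab => by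
      simpa using congrArg Subtype.val hab
    haveI := Infinite.of_injective _ hinj
    exact not_finite (NumberField.Units.torsion K)
  -- an embedding where some unit has norm > 1
  have hUφ : ∃ (u : (𝓞 K)ˣ) (φ : K →+* ℂ), 1 < ‖φ (ψ (u : 𝓞 K))‖ := by
    obtain ⟨u, hu⟩ := hUnt
    have hne : ¬ ∀ φ : K →+* ℂ, ‖φ (ψ (u : 𝓞 K))‖ = 1 := by
      intro hall
      obtain ⟨n, hn, hpow⟩ := NumberField.Embeddings.pow_eq_one_of_norm_eq_one K ℂ
        (RingOfIntegers.isIntegral_coe (u : 𝓞 K)) hall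
      apply hu
      refine isOfFinOrder_iff_pow_eq_one.mpr ⟨n, hn, ?_⟩
      have h1 : ψ (((u ^ n : (𝓞 K)ˣ) : 𝓞 K)) = ψ ((1 : (𝓞 K)ˣ) : 𝓞 K) := by
        rw [Units.val_pow_eq_pow_val, map_pow, Units.val_one, map_one]
        exact hpow
      exact Units.ext (RingOfIntegers.coe_injective h1)
    push_neg at hne
    obtain ⟨φ, hφ⟩ := hne
    rcases lt_or_gt_of_ne hφ with hlt | hgt
    · refine ⟨u⁻¹, φ, ?_⟩
      have hmul : φ (ψ ((u⁻¹ : (𝓞 K)ˣ) : 𝓞 K)) * φ (ψ (u : 𝓞 K)) = 1 := by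
        have h0 : ((u⁻¹ : (𝓞 K)ˣ) : 𝓞 K) * (u : 𝓞 K) = 1 := Units.inv_mul u
        rw [← map_mul, ← map_mul, h0, map_one, map_one]
      have := norm_nonneg (φ (ψ ((u⁻¹ : (𝓞 K)ˣ) : 𝓞 K)))
      have hn1 : ‖φ (ψ ((u⁻¹ : (𝓞 K)ˣ) : 𝓞 K))‖ * ‖φ (ψ (u : 𝓞 K))‖ = 1 := by
        rw [← norm_mul, hmul, norm_one]
      nlinarith [norm_nonneg (φ (ψ (u : 𝓞 K)))]
    · exact ⟨u, φ, hgt⟩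
  obtain ⟨u, φ, hu1⟩ := hUφ
  -- countability and enumeration of nonzero elements
  haveI hctK : Countable K := by
    have b := Module.finBasis ℚ K
    exact Countable.of_equiv _ b.repr.toEquiv.symm
  haveI : Countable (𝓞 K) := RingOfIntegers.coe_injective.countable
  haveI : Nonempty {x : 𝓞 K // x ≠ 0} := ⟨⟨1, one_ne_zero⟩⟩
  obtain ⟨e', he'⟩ := exists_surjective_nat {x : 𝓞 K // x ≠ 0}
  set e : ℕ → 𝓞 K := fun n => (e' n : 𝓞 K) with he
  have he0 : ∀ n, e n ≠ 0 := fun n => (e' n).2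
  -- the three special points of S
  obtain ⟨s₁, hs₁⟩ := Finset.card_pos.mp (by omega : 0 < S.card)
  obtain ⟨s₂, hs₂⟩ := Finset.card_pos.mp
    (by rw [Finset.card_erase_of_mem hs₁]; omega : 0 < (S.erase s₁).card)
  obtain ⟨s₃, hs₃⟩ := Finset.card_pos.mp
    (by rw [Finset.card_erase_of_mem hs₂, Finset.card_erase_of_mem hs₁]; omega :
      0 < ((S.erase s₁).erase s₂).card)
  have h12 : s₂ ≠ s₁ := (Finset.mem_erase.mp hs₂).1
  have h23 : s₃ ≠ s₂ := (Finset.mem_erase.mp hs₃).1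
  have h13 : s₃ ≠ s₁ := (Finset.mem_erase.mp (Finset.mem_erase.mp hs₃).2).1
  set c₁ : 𝓞 K := s₂ - s₃ with hc₁
  set c₂ : 𝓞 K := s₃ - s₁ with hc₂
  set c₃ : 𝓞 K := s₁ - s₂ with hc₃
  have hc₁0 : c₁ ≠ 0 := sub_ne_zero.mpr (fun h => h23 h.symm)
  have hc₂0 : c₂ ≠ 0 := sub_ne_zero.mpr h13
  have hc₃0 : c₃ ≠ 0 := sub_ne_zero.mpr (fun h => h12 h.symm)
  have hnorm_pos : ∀ x : 𝓞 K, x ≠ 0 → 0 < ‖φ (ψ x)‖ := by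
    intro x hx
    rw [norm_pos_iff]
    intro h
    have h2 : ψ x = 0 := φ.injective (by simp only [h, map_zero])
    exact hx (RingOfIntegers.coe_eq_zero_iff.mp h2)
  set a₁ : ℝ := ‖φ (ψ c₁)‖ with ha₁d
  set a₂ : ℝ := ‖φ (ψ c₂)‖ with ha₂d
  set a₃ : ℝ := ‖φ (ψ c₃)‖ with ha₃d
  have ha₁ : 0 < a₁ := hnorm_pos c₁ hc₁0
  have ha₂ : 0 < a₂ := hnorm_pos c₂ hc₂0
  have ha₃ : 0 < a₃ := hnorm_pos c₃ hc₃0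
  set A : ℝ := a₁ + a₂ + a₃ with hA
  set C : ℝ := (1 + A) * (1 / a₁ + 1 / a₂ + 1 / a₃) with hC
  have hA0 : 0 < A := by positivity
  have hC0 : 0 < C := by positivity
  have hCa : ∀ a : ℝ, 0 < a → (a = a₁ ∨ a = a₂ ∨ a = a₃) → 1 + A ≤ a * C := by
    intro a ha hmem
    have h1 : 1 ≤ a * (1 / a₁ + 1 / a₂ + 1 / a₃) := by
      rcases hmem with h | h | h
      · rw [h, mul_add, mul_add, mul_one_div, mul_one_div, mul_one_div, div_self ha₁.ne']
        linarith [div_nonneg ha₁.le ha₂.le, div_nonneg ha₁.le ha₃.le]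
      · rw [h, mul_add, mul_add, mul_one_div, mul_one_div, mul_one_div, div_self ha₂.ne']
        linarith [div_nonneg ha₂.le ha₁.le, div_nonneg ha₂.le ha₃.le]
      · rw [h, mul_add, mul_add, mul_one_div, mul_one_div, mul_one_div, div_self ha₃.ne']
        linarith [div_nonneg ha₃.le ha₁.le, div_nonneg ha₃.le ha₂.le]
    calc 1 + A = (1 + A) * 1 := by ring
    _ ≤ (1 + A) * (a * (1 / a₁ + 1 / a₂ + 1 / a₃)) := by
        apply mul_le_mul_of_nonneg_left h1; linarith
    _ = a * C := by rw [hC]; ring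
  -- the existence hypothesis for the recursion
  have hex : ∀ (n : ℕ) (B : ℝ), ∃ β : 𝓞 K,
      (∃ η : (𝓞 K)ˣ, β = (η : 𝓞 K) * e n) ∧ B ≤ ‖φ (ψ β)‖ := by
    intro n B
    have hen : 0 < ‖φ (ψ (e n))‖ := hnorm_pos _ (he0 n)
    obtain ⟨m, hm⟩ := pow_unbounded_of_one_lt (B / ‖φ (ψ (e n))‖) hu1
    refine ⟨((u ^ m : (𝓞 K)ˣ) : 𝓞 K) * e n, ⟨u ^ m, rfl⟩, ?_⟩
    have hval : ‖φ (ψ (((u ^ m : (𝓞 K)ˣ) : 𝓞 K) * e n))‖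
        = ‖φ (ψ (u : 𝓞 K))‖ ^ m * ‖φ (ψ (e n))‖ := by
      rw [map_mul, map_mul, norm_mul, Units.val_pow_eq_pow_val, map_pow, map_pow, norm_pow]
    rw [hval]
    rw [div_lt_iff₀ hen] at hm
    linarith
  -- the chosen representatives
  set r : ℕ → 𝓞 K := rA φ C e hex with hr
  set g : ℕ → ℝ := gA φ C e hex with hg
  -- orbit relation
  set orb : 𝓞 K → 𝓞 K → Prop := fun a b => ∃ η : (𝓞 K)ˣ, b = (η : 𝓞 K) * a with horb
  have orb_trans : ∀ a b c, orb a b → orb b c → orb a c := by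
    rintro a b c ⟨η, rfl⟩ ⟨η', rfl⟩
    exact ⟨η' * η, by rw [Units.val_mul, mul_assoc]⟩
  have orb_symm : ∀ a b, orb a b → orb b a := by
    rintro a b ⟨η, rfl⟩
    exact ⟨η⁻¹, by rw [Units.inv_mul_cancel_left]⟩
  have hrorb : ∀ n, orb (e n) (r n) := fun n => rA_orbit φ C e hex n
  -- the fundamental domain
  set Good : ℕ → Prop := fun n => ∀ m < n, ¬ orb (e m) (e n) with hGood
  refine ⟨{x | ∃ n, Good n ∧ r n = x}, ?_, ?_, ?_⟩
  · -- nonzero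
    rintro α ⟨n, -, rfl⟩
    obtain ⟨η, hη⟩ := hrorb n
    rw [hη]
    exact mul_ne_zero (Units.ne_zero η) (he0 n)
  · -- fundamental domain
    intro α hα
    have hPex : ∃ n, orb α (e n) := by
      obtain ⟨j, hj⟩ := he' ⟨α, hα⟩
      exact ⟨j, 1, by simp [he, hj]⟩
    set n₀ := Nat.find hPex with hn₀d
    have hn₀ : orb α (e n₀) := Nat.find_spec hPex
    have hgood₀ : Good n₀ := by
      rintro m hm ⟨η, hη⟩
      exact Nat.find_min hPex hm
        (orb_trans _ _ _ hn₀ (orb_symm _ _ ⟨η, hη⟩))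
    obtain ⟨η', hη'⟩ := Nat.find_spec hPex
    obtain ⟨η'', hη''⟩ := hrorb n₀
    refine ⟨(η'' * η')⁻¹, ⟨n₀, hgood₀, ?_⟩, ?_⟩
    · rw [inv_inv, Units.val_mul, hη'', hη', mul_assoc]
    · rintro η₂ ⟨m, hgoodm, hrm⟩
      -- r m = η₂⁻¹ * α and r n₀ = (η''η') * α; both orbits of α
      have horbm : orb α (e m) := by
        obtain ⟨η₃, hη₃⟩ := hrorb m
        refine ⟨η₃⁻¹ * η₂⁻¹, ?_⟩
        calc e m = ((η₃⁻¹ : (𝓞 K)ˣ) : 𝓞 K) * r m := by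
              rw [hη₃, Units.inv_mul_cancel_left]
        _ = ((η₃⁻¹ : (𝓞 K)ˣ) : 𝓞 K) * (((η₂⁻¹ : (𝓞 K)ˣ) : 𝓞 K) * α) := by rw [hrm]
        _ = (((η₃⁻¹ * η₂⁻¹ : (𝓞 K)ˣ)) : 𝓞 K) * α := by rw [Units.val_mul, mul_assoc]
      have hmn : m = n₀ := by
        rcases lt_trichotomy m n₀ with h | h | h
        · exact absurd horbm (Nat.find_min hPex h)
        · exact h
        · exact absurd (orb_trans _ _ _ (orb_symm _ _ ⟨η', hη'⟩) horbm) (hgoodm n₀ h)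
      subst hmn
      -- now η₂⁻¹ * α = r m = (η''η') * α
      have hval : ((η₂⁻¹ : (𝓞 K)ˣ) : 𝓞 K) * α = (((η'' * η') : (𝓞 K)ˣ) : 𝓞 K) * α := by
        rw [← hrm, hη'', hη', Units.val_mul, mul_assoc]
      have : ((η₂⁻¹ : (𝓞 K)ˣ) : 𝓞 K) = (((η'' * η') : (𝓞 K)ˣ) : 𝓞 K) :=
        mul_right_cancel₀ hα hval
      have : η₂⁻¹ = η'' * η' := Units.ext this
      rw [← this, inv_inv]
  · -- no constellation
    rintro ⟨α, k, hk, hall⟩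
    have hkne : (k : 𝓞 K) ≠ 0 := Nat.cast_ne_zero.mpr hk.ne'
    -- rewrite the three points
    have hnsmul : ∀ s : 𝓞 K, k • s = (k : 𝓞 K) * s := fun s => nsmul_eq_mul k s
    obtain ⟨n₁, -, hr₁⟩ := hall s₁ hs₁
    obtain ⟨n₂, -, hr₂⟩ := hall s₂ (Finset.mem_of_mem_erase hs₂)
    obtain ⟨n₃, -, hr₃⟩ := hall s₃ (Finset.mem_of_mem_erase (Finset.mem_of_mem_erase hs₃))
    rw [hnsmul] at hr₁ hr₂ hr₃
    -- distinct indices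
    have hne : ∀ {i j : ℕ} {si sj : 𝓞 K}, r i = α + (k : 𝓞 K) * si →
        r j = α + (k : 𝓞 K) * sj → si ≠ sj → i ≠ j := by
      intro i j si sj hi hj hsij hij
      apply hsij
      apply mul_left_cancel₀ hkne
      have : α + (k : 𝓞 K) * si = α + (k : 𝓞 K) * sj := by rw [← hi, ← hj, hij]
      exact add_left_cancel this
    have hn12 : n₁ ≠ n₂ := hne hr₁ hr₂ (fun h => h12 h.symm)
    have hn13 : n₁ ≠ n₃ := hne hr₁ hr₃ (fun h => h13 h.symm)
    have hn23 : n₂ ≠ n₃ := hne hr₂ hr₃ (fun h => h23 h.symm)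
    -- the key contradiction
    have key : ∀ (m₁ m₂ m₃ : ℕ) (d₁ d₂ d₃ : 𝓞 K), m₁ < m₃ → m₂ < m₃ → m₁ ≠ m₂ →
        d₁ * r m₁ + d₂ * r m₂ + d₃ * r m₃ = 0 →
        ‖φ (ψ d₁)‖ ≤ A → ‖φ (ψ d₂)‖ ≤ A → 1 + A ≤ ‖φ (ψ d₃)‖ * C → False := by
      intro m₁ m₂ m₃ d₁ d₂ d₃ h₁ h₂ h₁₂ hrel hd₁ hd₂ hd₃
      set N₁ := ‖φ (ψ (r m₁))‖ with hN₁
      set N₂ := ‖φ (ψ (r m₂))‖ with hN₂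
      set N₃ := ‖φ (ψ (r m₃))‖ with hN₃
      have hN₁0 : 0 ≤ N₁ := norm_nonneg _
      have hN₂0 : 0 ≤ N₂ := norm_nonneg _
      -- image of the relation in ℂ
      have hrelC : φ (ψ d₃) * φ (ψ (r m₃)) =
          -(φ (ψ d₁) * φ (ψ (r m₁)) + φ (ψ d₂) * φ (ψ (r m₂))) := by
        have := congrArg (fun x : 𝓞 K => φ (ψ x)) hrel
        simp only [map_add, map_mul, map_zero] at this
        linear_combination this
      have hup : ‖φ (ψ d₃)‖ * N₃ ≤ A * N₁ + A * N₂ := by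
        calc ‖φ (ψ d₃)‖ * N₃ = ‖φ (ψ d₃) * φ (ψ (r m₃))‖ := (norm_mul _ _).symm
        _ = ‖φ (ψ d₁) * φ (ψ (r m₁)) + φ (ψ d₂) * φ (ψ (r m₂))‖ := by rw [hrelC, norm_neg]
        _ ≤ ‖φ (ψ d₁)‖ * N₁ + ‖φ (ψ d₂)‖ * N₂ := by
            refine (norm_add_le _ _).trans ?_
            rw [norm_mul, norm_mul]
        _ ≤ A * N₁ + A * N₂ := by
            have := mul_le_mul_of_nonneg_right hd₁ hN₁0
            have := mul_le_mul_of_nonneg_right hd₂ hN₂0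
            linarith
      -- lower bound on N₃
      have hsum : N₁ + N₂ ≤ g m₃ := by
        rcases h₁₂.lt_or_gt with h | h
        · exact gA_ge φ C e hex h h₂
        · have := gA_ge φ C e hex h h₁
          linarith
      have hlow : C * (1 + (N₁ + N₂)) ≤ N₃ := by
        refine le_trans ?_ (rA_norm φ C e hex m₃)
        apply mul_le_mul_of_nonneg_left _ hC0.le
        linarith
      have h5 : ‖φ (ψ d₃)‖ * (C * (1 + (N₁ + N₂))) ≤ ‖φ (ψ d₃)‖ * N₃ :=
        mul_le_mul_of_nonneg_left hlow (norm_nonneg _)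
      have h6 : (1 + A) * (1 + (N₁ + N₂)) ≤ (‖φ (ψ d₃)‖ * C) * (1 + (N₁ + N₂)) :=
        mul_le_mul_of_nonneg_right hd₃ (by linarith)
      nlinarith
    -- bounds on the coefficients
    have hb₁ : ‖φ (ψ c₁)‖ ≤ A := by rw [← ha₁d]; linarith
    have hb₂ : ‖φ (ψ c₂)‖ ≤ A := by rw [← ha₂d]; linarith
    have hb₃ : ‖φ (ψ c₃)‖ ≤ A := by rw [← ha₃d]; linarith
    have hg₁ : 1 + A ≤ ‖φ (ψ c₁)‖ * C := hCa a₁ ha₁ (Or.inl rfl)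
    have hg₂ : 1 + A ≤ ‖φ (ψ c₂)‖ * C := hCa a₂ ha₂ (Or.inr (Or.inl rfl))
    have hg₃ : 1 + A ≤ ‖φ (ψ c₃)‖ * C := hCa a₃ ha₃ (Or.inr (Or.inr rfl))
    -- the basic linear relation among the three points
    have hrel : c₁ * r n₁ + c₂ * r n₂ + c₃ * r n₃ = 0 := by
      rw [hr₁, hr₂, hr₃, hc₁, hc₂, hc₃]; ring
    have hrelA : c₁ * r n₁ + c₃ * r n₃ + c₂ * r n₂ = 0 := by linear_combination hrel
    have hrelB : c₂ * r n₂ + c₃ * r n₃ + c₁ * r n₁ = 0 := by linear_combination hrel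
    -- case analysis on the largest index
    rcases hn13.lt_or_gt with h13' | h31'
    · rcases hn23.lt_or_gt with h23' | h32'
      · exact key n₁ n₂ n₃ c₁ c₂ c₃ h13' h23' hn12 hrel hb₁ hb₂ hg₃
      · exact key n₁ n₃ n₂ c₁ c₃ c₂ (h13'.trans h32') h32' hn13 hrelA hb₁ hb₃ hg₂
    · rcases hn12.lt_or_gt with h12' | h21'
      · exact key n₁ n₃ n₂ c₁ c₃ c₂ h12' (h31'.trans h12') hn13 hrelA hb₁ hb₃ hg₂
      · exact key n₂ n₃ n₁ c₂ c₃ c₁ h21' h31' hn23 hrelB hb₂ hb₃ hg₁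
end

section
/- Let K be a number field of degree n, ω an integral basis of K, and let k := r₁ + r₂ − 1 be the rank of the unit group of 𝓞_K. Then: (1) there exists Ξ > 0 depending only on ω such that for all real M ≥ 1 and all nonzero α ∈ 𝓞_K with 𝐍(α) ≤ Ξ·Mⁿ, the number of β ∈ 𝓞_K(ω,M) associate to α is at most Ξ·(log(Ξ·Mⁿ/𝐍(α)))^k; and (2) there exists Ξ' > 0 depending only on ω such that for all real M ≥ 2 and all nonzero α ∈ 𝓞_K, the number of β ∈ 𝓞_K(ω,M) associate to α is at most Ξ'·(log M)^k. -/
open scoped Classical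
open NumberField NumberField.Units NumberField.Units.dirichletUnitTheorem
  NumberField.InfinitePlace

section CountingAux

variable {K : Type*} [Field K] [NumberField K]

private lemma cuo_coe_prod_norm (β : 𝓞 K) :
    ∏ w : InfinitePlace K, w (β : K) ^ mult w = ((Algebra.norm ℤ β).natAbs : ℝ) := by
  rw [prod_eq_abs_norm, ← Algebra.coe_norm_int, Nat.cast_natAbs]
  push_cast
  ring

private lemma cuo_wpos {β : 𝓞 K} (hβ : β ≠ 0) (w : InfinitePlace K) : 0 < w (β : K) :=
  pos_iff.mpr (by exact_mod_cast hβ)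

private lemma cuo_natAbs_one_le {β : 𝓞 K} (hβ : β ≠ 0) :
    (1 : ℝ) ≤ ((Algebra.norm ℤ β).natAbs : ℝ) := by
  have h : Algebra.norm ℤ β ≠ 0 := Algebra.norm_ne_zero_iff.mpr hβ
  exact_mod_cast Nat.one_le_iff_ne_zero.mpr (Int.natAbs_ne_zero.mpr h)

private lemma cuo_assoc_norm {α β : 𝓞 K} (h : Associated α β) :
    (Algebra.norm ℤ β).natAbs = (Algebra.norm ℤ α).natAbs := by
  have h2 := h.map (Algebra.norm ℤ : 𝓞 K →* ℤ)
  exact (Int.associated_iff_natAbs.mp h2).symm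

private lemma cuo_sum_mult_log {β : 𝓞 K} (hβ : β ≠ 0) :
    ∑ w : InfinitePlace K, (mult w : ℝ) * Real.log (w (β : K))
      = Real.log ((Algebra.norm ℤ β).natAbs) := by
  rw [← cuo_coe_prod_norm β, Real.log_prod]
  · exact Finset.sum_congr rfl fun w _ => by rw [Real.log_pow]
  · exact fun w _ => pow_ne_zero _ (ne_of_gt (cuo_wpos hβ w))

private lemma cuo_norm_le_pow {β : 𝓞 K} (hβ : β ≠ 0) {B : ℝ}
    (hwB : ∀ w : InfinitePlace K, w (β : K) ≤ B) :
    ((Algebra.norm ℤ β).natAbs : ℝ) ≤ B ^ (Module.finrank ℚ K) := by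
  rw [← cuo_coe_prod_norm β, ← sum_mult_eq, ← Finset.prod_pow_eq_pow_sum]
  exact Finset.prod_le_prod (fun w _ => pow_nonneg (apply_nonneg w _) _)
    (fun w _ => pow_le_pow_left₀ (apply_nonneg w _) (hwB w) _)

private lemma cuo_log_norm_le {β : 𝓞 K} (hβ : β ≠ 0) {B : ℝ}
    (hwB : ∀ w : InfinitePlace K, w (β : K) ≤ B) :
    Real.log ((Algebra.norm ℤ β).natAbs) ≤ (Module.finrank ℚ K) * Real.log B := by
  have h1 := cuo_norm_le_pow hβ hwB
  have hN1 := cuo_natAbs_one_le hβ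
  calc Real.log ((Algebra.norm ℤ β).natAbs)
      ≤ Real.log (B ^ (Module.finrank ℚ K)) := Real.log_le_log (by linarith) h1
    _ = (Module.finrank ℚ K) * Real.log B := Real.log_pow _ _

private lemma cuo_place_log_bound {β : 𝓞 K} (hβ : β ≠ 0) {B : ℝ}
    (hwB : ∀ w : InfinitePlace K, w (β : K) ≤ B) (w : InfinitePlace K) :
    |(mult w : ℝ) * Real.log (w (β : K))
        - (mult w : ℝ) / (Module.finrank ℚ K) * Real.log ((Algebra.norm ℤ β).natAbs)|
      ≤ (Module.finrank ℚ K) * Real.log B - Real.log ((Algebra.norm ℤ β).natAbs) := by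
  set n : ℕ := Module.finrank ℚ K with hn
  have hn0 : (0 : ℝ) < n := by exact_mod_cast Module.finrank_pos
  set N : ℝ := ((Algebra.norm ℤ β).natAbs : ℝ) with hNd
  set T : ℝ := n * Real.log B - Real.log N with hT
  have hT0 : 0 ≤ T := sub_nonneg.mpr (cuo_log_norm_le hβ hwB)
  set g : InfinitePlace K → ℝ :=
    fun w' => (mult w' : ℝ) * Real.log (w' (β : K))
      - (mult w' : ℝ) / n * Real.log N with hg
  have hsummult : ∑ w' : InfinitePlace K, (mult w' : ℝ) = n := by
    rw [hn]; exact_mod_cast sum_mult_eq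
  have hgsum : ∑ w', g w' = 0 := by
    have h2 : ∑ w' : InfinitePlace K, (mult w' : ℝ) / n * Real.log N = Real.log N := by
      rw [← Finset.sum_mul, ← Finset.sum_div, hsummult, div_self (ne_of_gt hn0), one_mul]
    rw [hg, Finset.sum_sub_distrib, cuo_sum_mult_log hβ, h2, sub_self]
  have hgle : ∀ w', g w' ≤ (mult w' : ℝ) / n * T := by
    intro w'
    have h1 : Real.log (w' (β : K)) ≤ Real.log B :=
      Real.log_le_log (cuo_wpos hβ w') (hwB w')
    have h2 : (mult w' : ℝ) * Real.log (w' (β : K)) ≤ (mult w' : ℝ) * Real.log B :=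
      mul_le_mul_of_nonneg_left h1 (by positivity)
    have h3 : (mult w' : ℝ) / n * T
        = (mult w' : ℝ) * Real.log B - (mult w' : ℝ) / n * Real.log N := by
      rw [hT]; field_simp
    rw [hg]; dsimp only; rw [h3]; linarith
  have hmultle : ∀ w' : InfinitePlace K, (mult w' : ℝ) ≤ n := by
    intro w'
    rw [← hsummult]
    exact Finset.single_le_sum (f := fun w'' : InfinitePlace K => (mult w'' : ℝ))
      (fun w'' _ => Nat.cast_nonneg _) (Finset.mem_univ w')
  have hdivle : ∀ w' : InfinitePlace K, (mult w' : ℝ) / n ≤ 1 := fun w' =>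
    (div_le_one hn0).mpr (hmultle w')
  have hupper : g w ≤ T := by
    calc g w ≤ (mult w : ℝ) / n * T := hgle w
      _ ≤ 1 * T := mul_le_mul_of_nonneg_right (hdivle w) hT0
      _ = T := one_mul T
  have hlower : -T ≤ g w := by
    have hsplit : g w + ∑ w' ∈ Finset.univ.erase w, g w' = 0 := by
      rw [Finset.add_sum_erase _ g (Finset.mem_univ w)]
      exact hgsum
    have hsum_le : ∑ w' ∈ Finset.univ.erase w, g w' ≤ T := by
      calc ∑ w' ∈ Finset.univ.erase w, g w'
          ≤ ∑ w' ∈ Finset.univ.erase w, (mult w' : ℝ) / n * T :=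
            Finset.sum_le_sum fun w' _ => hgle w'
        _ = (∑ w' ∈ Finset.univ.erase w, (mult w' : ℝ)) / n * T := by
            rw [Finset.sum_div, Finset.sum_mul]
        _ ≤ 1 * T := by
            refine mul_le_mul_of_nonneg_right ?_ hT0
            rw [div_le_one hn0, ← hsummult]
            exact Finset.sum_le_sum_of_subset_of_nonneg (Finset.subset_univ _)
              (fun w'' _ _ => by positivity)
        _ = T := one_mul T
    linarith
  exact abs_le.mpr ⟨hlower, hupper⟩

private lemma cuo_component_bound {α β₀ β : 𝓞 K} (hα : α ≠ 0)
    (h₀ : Associated α β₀) (h : Associated α β) {u : (𝓞 K)ˣ} (hu : β₀ * u = β)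
    {B : ℝ} (hwB₀ : ∀ w : InfinitePlace K, w (β₀ : K) ≤ B)
    (hwB : ∀ w : InfinitePlace K, w (β : K) ≤ B)
    (w : {w : InfinitePlace K // w ≠ w₀}) :
    |logEmbedding K (Additive.ofMul u) w|
      ≤ 2 * ((Module.finrank ℚ K) * Real.log B
        - Real.log ((Algebra.norm ℤ α).natAbs)) := by
  have hβ₀ : β₀ ≠ 0 := h₀.ne_zero_iff.mp hα
  have hβ : β ≠ 0 := h.ne_zero_iff.mp hα
  have hN₀ : (Algebra.norm ℤ β₀).natAbs = (Algebra.norm ℤ α).natAbs := cuo_assoc_norm h₀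
  have hN : (Algebra.norm ℤ β).natAbs = (Algebra.norm ℤ α).natAbs := cuo_assoc_norm h
  have t1 := cuo_place_log_bound hβ hwB w.val
  have t2 := cuo_place_log_bound hβ₀ hwB₀ w.val
  rw [hN] at t1
  rw [hN₀] at t2
  have hkey : (β : K) = (β₀ : K) * ((u : 𝓞 K) : K) := by
    rw [← hu]; push_cast; ring
  have hwmul : w.val (β : K) = w.val (β₀ : K) * w.val ((u : 𝓞 K) : K) := by
    rw [hkey, map_mul]
  have hupos : (0 : ℝ) < w.val ((u : 𝓞 K) : K) :=
    cuo_wpos (by exact_mod_cast u.ne_zero) w.val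
  have hlog : Real.log (w.val ((u : 𝓞 K) : K))
      = Real.log (w.val (β : K)) - Real.log (w.val (β₀ : K)) := by
    have h1 : w.val ((u : 𝓞 K) : K) = w.val (β : K) / w.val (β₀ : K) := by
      rw [hwmul]
      exact (mul_div_cancel_left₀ _ (ne_of_gt (cuo_wpos hβ₀ w.val))).symm
    rw [h1, Real.log_div (ne_of_gt (cuo_wpos hβ w.val)) (ne_of_gt (cuo_wpos hβ₀ w.val))]
  rw [logEmbedding_component]
  have heq : (mult w.val : ℝ) * Real.log (w.val ((u : 𝓞 K) : K))
      = ((mult w.val : ℝ) * Real.log (w.val (β : K))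
          - (mult w.val : ℝ) / (Module.finrank ℚ K)
            * Real.log ((Algebra.norm ℤ α).natAbs))
        - ((mult w.val : ℝ) * Real.log (w.val (β₀ : K))
          - (mult w.val : ℝ) / (Module.finrank ℚ K)
            * Real.log ((Algebra.norm ℤ α).natAbs)) := by
    rw [hlog]; ring
  rw [heq]
  refine le_trans (abs_sub _ _) ?_
  linarith

private lemma cuo_logEmbedding_decomp (u : (𝓞 K)ˣ) (ζ : torsion K)
    (m : Fin (rank K) → ℤ) (h : u = (ζ : (𝓞 K)ˣ) * ∏ i, fundSystem K i ^ m i) :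
    logEmbedding K (Additive.ofMul u)
      = ∑ i, (m i : ℝ) • ((basisUnitLattice K).ofZLatticeBasis ℝ (unitLattice K) i) := by
  have h1 : Additive.ofMul u
      = Additive.ofMul (ζ : (𝓞 K)ˣ) + ∑ i, m i • Additive.ofMul (fundSystem K i) := by
    rw [h, ofMul_mul, ofMul_prod]
    simp_rw [ofMul_zpow]
  rw [h1, map_add, map_sum, (logEmbedding_eq_zero_iff).mpr ζ.2, zero_add]
  refine Finset.sum_congr rfl fun i _ => ?_
  rw [map_zsmul, logEmbedding_fundSystem, Module.Basis.ofZLatticeBasis_apply,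
    Int.cast_smul_eq_zsmul]

end CountingAux

set_option maxHeartbeats 2000000 in
/-- **Counting elements of `𝓞_K^×`-orbits with respect to the `ℓ∞`-length.**
With `k = r₁ + r₂ − 1` the rank of the unit group:
(1) there is `Ξ > 0` such that for `M ≥ 1` and nonzero `α` with `𝐍(α) ≤ Ξ·Mⁿ`, the number of
elements of `𝓞_K(ω, M)` associate to `α` is at most `Ξ·(log(Ξ·Mⁿ/𝐍(α)))^k`;
(2) there is `Ξ' > 0` such that for `M ≥ 2` and nonzero `α`, this number is at most
`Ξ'·(log M)^k`. -/
theorem counting_unit_orbits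
    {K : Type*} [Field K] [NumberField K]
    {ι : Type*} [Fintype ι] (ω : Module.Basis ι ℤ (RingOfIntegers K)) :
    (∃ Ξ : ℝ, 0 < Ξ ∧
      ∀ M : ℝ, 1 ≤ M → ∀ α : RingOfIntegers K, α ≠ 0 →
        ((Algebra.norm ℤ α).natAbs : ℝ) ≤ Ξ * M ^ Fintype.card ι →
        (({β : RingOfIntegers K | Associated α β ∧ ∀ i, |(ω.repr β i : ℝ)| ≤ M}).ncard : ℝ) ≤
          Ξ * (Real.log (Ξ * M ^ Fintype.card ι / ((Algebra.norm ℤ α).natAbs : ℝ))) ^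
            NumberField.Units.rank K) ∧
    (∃ Ξ' : ℝ, 0 < Ξ' ∧
      ∀ M : ℝ, 2 ≤ M → ∀ α : RingOfIntegers K, α ≠ 0 →
        (({β : RingOfIntegers K | Associated α β ∧ ∀ i, |(ω.repr β i : ℝ)| ≤ M}).ncard : ℝ) ≤
          Ξ' * (Real.log M) ^ NumberField.Units.rank K) := by
  classical
  set n : ℕ := Fintype.card ι with hnι
  have hcard : n = Module.finrank ℚ K :=
    (Module.finrank_eq_card_basis ω).symm.trans (RingOfIntegers.rank K)
  have hn1 : 1 ≤ n := by rw [hcard]; exact Module.finrank_pos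
  have hn1' : (1 : ℝ) ≤ n := by exact_mod_cast hn1
  set k : ℕ := NumberField.Units.rank K with hk
  -- constant controlling places of elements of the box
  obtain ⟨C, hC1, hCsum⟩ : ∃ C : ℝ, 1 ≤ C ∧
      ∀ w : InfinitePlace K, ∑ i, w ((ω i : 𝓞 K) : K) ≤ C := by
    refine ⟨1 + ∑ w : InfinitePlace K, ∑ i, w ((ω i : 𝓞 K) : K),
      le_add_of_nonneg_right (Finset.sum_nonneg fun w _ =>
        Finset.sum_nonneg fun i _ => apply_nonneg _ _), fun w => ?_⟩
    have h1 : ∑ i, w ((ω i : 𝓞 K) : K)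
        ≤ ∑ w' : InfinitePlace K, ∑ i, w' ((ω i : 𝓞 K) : K) :=
      Finset.single_le_sum (f := fun w' : InfinitePlace K => ∑ i, w' ((ω i : 𝓞 K) : K))
        (fun w' _ => Finset.sum_nonneg fun i _ => apply_nonneg _ _) (Finset.mem_univ w)
    linarith
  have hC0 : (0 : ℝ) < C := by linarith
  -- constant controlling coordinates w.r.t. the unit lattice basis
  obtain ⟨D, hD1, hcoord⟩ : ∃ D : ℝ, 1 ≤ D ∧
      ∀ (x : {w : InfinitePlace K // w ≠ w₀} → ℝ) (i : Fin (rank K)),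
        |((basisUnitLattice K).ofZLatticeBasis ℝ (unitLattice K)).repr x i| ≤ D * ‖x‖ := by
    set b := (basisUnitLattice K).ofZLatticeBasis ℝ (unitLattice K) with hb
    refine ⟨1 + ∑ i, ‖LinearMap.toContinuousLinearMap (b.coord i)‖,
      le_add_of_nonneg_right (Finset.sum_nonneg fun i _ => norm_nonneg _), fun x i => ?_⟩
    have h1 : |b.coord i x| ≤ ‖LinearMap.toContinuousLinearMap (b.coord i)‖ * ‖x‖ := by
      have := (LinearMap.toContinuousLinearMap (b.coord i)).le_opNorm x
      rwa [LinearMap.coe_toContinuousLinearMap', Real.norm_eq_abs] at this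
    have h2 : ‖LinearMap.toContinuousLinearMap (b.coord i)‖
        ≤ 1 + ∑ j, ‖LinearMap.toContinuousLinearMap (b.coord j)‖ := by
      have := Finset.single_le_sum
        (f := fun j : Fin (rank K) => ‖LinearMap.toContinuousLinearMap (b.coord j)‖)
        (fun j _ => norm_nonneg _) (Finset.mem_univ i)
      linarith
    calc |b.repr x i| = |b.coord i x| := by rw [Module.Basis.coord_apply]
      _ ≤ ‖LinearMap.toContinuousLinearMap (b.coord i)‖ * ‖x‖ := h1
      _ ≤ _ := mul_le_mul_of_nonneg_right h2 (norm_nonneg x)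
  have hD0 : (0 : ℝ) < D := by linarith
  haveI : Fintype (torsion K) := Fintype.ofFinite _
  set t : ℕ := Fintype.card (torsion K) with ht
  have ht1 : 1 ≤ t := Fintype.card_pos
  have ht1' : (1 : ℝ) ≤ t := by exact_mod_cast ht1
  set Ξ : ℝ := (C * Real.exp 1) ^ n + t * (4 * D + 1) ^ k with hΞ
  have hCe : (0 : ℝ) < C * Real.exp 1 := mul_pos hC0 (Real.exp_pos 1)
  have hΞpos : 0 < Ξ := by
    rw [hΞ]
    have h1 : (0:ℝ) < (C * Real.exp 1) ^ n := pow_pos hCe n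
    have h2 : (0:ℝ) < (t : ℝ) * (4 * D + 1) ^ k :=
      mul_pos (by linarith) (pow_pos (by linarith) k)
    linarith
  have hΞge : (C * Real.exp 1) ^ n ≤ Ξ :=
    le_add_of_nonneg_right (mul_nonneg (by linarith) (pow_nonneg (by linarith) k))
  have hΞgeC : C ^ n ≤ Ξ := by
    refine le_trans ?_ hΞge
    refine pow_le_pow_left₀ (by linarith) ?_ n
    nlinarith [Real.add_one_le_exp 1]
  have hlogΞ : (n : ℝ) * Real.log C + n ≤ Real.log Ξ := by
    have h1 : Real.log ((C * Real.exp 1) ^ n) ≤ Real.log Ξ :=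
      Real.log_le_log (pow_pos hCe n) hΞge
    rw [Real.log_pow, Real.log_mul (ne_of_gt hC0) (Real.exp_ne_zero 1),
      Real.log_exp, mul_add, mul_one] at h1
    exact h1
  have hlogC0 : 0 ≤ Real.log C := Real.log_nonneg hC1
  have hlogΞ1 : 1 ≤ Real.log Ξ := by nlinarith
  -- Part 1 as a `have`
  have key1 : ∀ M : ℝ, 1 ≤ M → ∀ α : 𝓞 K, α ≠ 0 →
      ((Algebra.norm ℤ α).natAbs : ℝ) ≤ Ξ * M ^ n →
      (({β : 𝓞 K | Associated α β ∧ ∀ i, |(ω.repr β i : ℝ)| ≤ M}).ncard : ℝ) ≤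
        Ξ * (Real.log (Ξ * M ^ n / ((Algebra.norm ℤ α).natAbs : ℝ))) ^ k := by
    intro M hM α hα hNle
    set N : ℝ := ((Algebra.norm ℤ α).natAbs : ℝ) with hNd
    have hN1 : 1 ≤ N := cuo_natAbs_one_le hα
    set S := {β : 𝓞 K | Associated α β ∧ ∀ i, |(ω.repr β i : ℝ)| ≤ M} with hSd
    set SL : ℝ := Real.log (Ξ * M ^ n / N) with hSL
    have hMn : (0:ℝ) < M ^ n := pow_pos (by linarith) n
    have hSL0 : 0 ≤ SL := Real.log_nonneg ((one_le_div (by linarith)).mpr hNle)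
    rcases S.eq_empty_or_nonempty with hS | ⟨β₀, hβ₀⟩
    · rw [hS]
      simp only [Set.ncard_empty, Nat.cast_zero]
      exact mul_nonneg (le_of_lt hΞpos) (pow_nonneg hSL0 k)
    have hβne : ∀ β ∈ S, β ≠ 0 := fun β hβ => (hβ.1).ne_zero_iff.mp hα
    have hwbox : ∀ β ∈ S, ∀ w : InfinitePlace K, w (β : K) ≤ C * M := by
      intro β hβ w
      have hrepr : (β : K) = ∑ i, (ω.repr β i) • ((ω i : 𝓞 K) : K) := by
        nth_rw 1 [← ω.sum_repr β]
        rw [show ((↑(∑ i, (ω.repr β) i • ω i) : K))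
            = algebraMap (𝓞 K) K (∑ i, (ω.repr β) i • ω i) from rfl, map_sum]
        exact Finset.sum_congr rfl fun i _ => by rw [map_zsmul]
      have hsmul : ∀ i, w ((ω.repr β i) • ((ω i : 𝓞 K) : K))
          = |(ω.repr β i : ℝ)| * w ((ω i : 𝓞 K) : K) := by
        intro i
        rw [zsmul_eq_mul, map_mul]
        congr 1
        rw [← norm_embedding_eq, map_intCast, Complex.norm_intCast]
      calc w (β : K) = w (∑ i, (ω.repr β i) • ((ω i : 𝓞 K) : K)) := by rw [← hrepr]
        _ ≤ ∑ i, w ((ω.repr β i) • ((ω i : 𝓞 K) : K)) := w.1.sum_le _ _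
        _ = ∑ i, |(ω.repr β i : ℝ)| * w ((ω i : 𝓞 K) : K) :=
            Finset.sum_congr rfl fun i _ => hsmul i
        _ ≤ ∑ i, M * w ((ω i : 𝓞 K) : K) :=
            Finset.sum_le_sum fun i _ =>
              mul_le_mul_of_nonneg_right (hβ.2 i) (apply_nonneg _ _)
        _ = M * ∑ i, w ((ω i : 𝓞 K) : K) := by rw [Finset.mul_sum]
        _ ≤ M * C := mul_le_mul_of_nonneg_left (hCsum w) (by linarith)
        _ = C * M := mul_comm _ _
    have hCM1 : 1 ≤ C * M := by nlinarith
    set T : ℝ := n * Real.log (C * M) - Real.log N with hT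
    have hT0 : 0 ≤ T := by
      have h1 := cuo_log_norm_le (hβne β₀ hβ₀) (hwbox β₀ hβ₀)
      rw [cuo_assoc_norm hβ₀.1, ← hcard] at h1
      rw [hT]; rw [hNd]; linarith
    have hTSL : T + 1 ≤ SL := by
      have hlogexp : SL = Real.log Ξ + n * Real.log M - Real.log N := by
        rw [hSL, Real.log_div (ne_of_gt (mul_pos hΞpos hMn)) (by linarith),
          Real.log_mul (ne_of_gt hΞpos) (ne_of_gt hMn), Real.log_pow]
      have hlogCM : Real.log (C * M) = Real.log C + Real.log M :=
        Real.log_mul (by linarith) (by linarith)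
      rw [hlogexp, hT, hlogCM, mul_add]
      linarith
    have hSL1 : 1 ≤ SL := by linarith
    set R : ℝ := 2 * D * T with hR
    have hR0 : 0 ≤ R := mul_nonneg (by linarith) hT0
    -- the decomposition of elements of `S`
    have key : ∀ β ∈ S, ∃ p : torsion K × (Fin (rank K) → ℤ),
        β = β₀ * ((p.1 : (𝓞 K)ˣ) * ∏ i, fundSystem K i ^ p.2 i : (𝓞 K)ˣ) ∧
        ∀ i, p.2 i ∈ Finset.Icc (-⌊R⌋) ⌊R⌋ := by
      intro β hβ
      obtain ⟨u, hu⟩ := (hβ₀.1).symm.trans hβ.1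
      obtain ⟨⟨ζ, m⟩, hzm, -⟩ := exist_unique_eq_mul_prod K u
      have hzm' : u = (ζ : (𝓞 K)ˣ) * ∏ i, fundSystem K i ^ m i := hzm
      refine ⟨⟨ζ, m⟩, ?_, ?_⟩
      · rw [← hu, hzm']
      · intro i
        have habs : |(m i : ℝ)| ≤ R := by
          have hdecomp := cuo_logEmbedding_decomp u ζ m hzm'
          have hbnd : ∀ w' : {w : InfinitePlace K // w ≠ w₀},
              |logEmbedding K (Additive.ofMul u) w'| ≤ 2 * T := by
            intro w'
            have h1 := cuo_component_bound hα hβ₀.1 hβ.1 hu (hwbox β₀ hβ₀) (hwbox β hβ) w'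
            rw [← hcard] at h1
            rw [hT, hNd]
            exact h1
          have hnorm : ‖logEmbedding K (Additive.ofMul u)‖ ≤ 2 * T := by
            refine (pi_norm_le_iff_of_nonneg (by linarith)).mpr fun w' => ?_
            rw [Real.norm_eq_abs]; exact hbnd w'
          have hrepr : ((basisUnitLattice K).ofZLatticeBasis ℝ (unitLattice K)).repr
              (logEmbedding K (Additive.ofMul u)) i = m i := by
            rw [hdecomp]
            have h2 := ((basisUnitLattice K).ofZLatticeBasis ℝ (unitLattice K)).repr_sum_self
              (fun j => ((m j : ℝ)))
            rw [h2]
          have e1 : |(m i : ℝ)| ≤ D * ‖logEmbedding K (Additive.ofMul u)‖ := by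
            rw [← hrepr]; exact hcoord _ i
          have e2 : D * ‖logEmbedding K (Additive.ofMul u)‖ ≤ D * (2 * T) :=
            mul_le_mul_of_nonneg_left hnorm (by linarith)
          rw [hR]
          linarith
        rw [Finset.mem_Icc]
        have h2 := abs_le.mp habs
        constructor
        · rw [neg_le]
          exact Int.le_floor.mpr (by push_cast; linarith [h2.1])
        · exact Int.le_floor.mpr (by push_cast; linarith [h2.2])
    -- counting
    set F : Finset (torsion K × (Fin (rank K) → ℤ)) :=
      Finset.univ ×ˢ Fintype.piFinset (fun _ => Finset.Icc (-⌊R⌋) ⌊R⌋) with hF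
    have hfloor0 : (0 : ℤ) ≤ ⌊R⌋ := Int.floor_nonneg.mpr hR0
    set f : 𝓞 K → torsion K × (Fin (rank K) → ℤ) :=
      fun β => if h : β ∈ S then (key β h).choose else ⟨1, fun _ => 0⟩ with hf
    have hmaps : ∀ β ∈ S, f β ∈ (F : Set (torsion K × (Fin (rank K) → ℤ))) := by
      intro β hβ
      have hfβ : f β = (key β hβ).choose := dif_pos hβ
      obtain ⟨-, hbound⟩ := (key β hβ).choose_spec
      rw [hfβ, hF]
      simp only [Finset.coe_product, Set.mem_prod, Finset.mem_coe, Finset.mem_univ,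
        true_and, Fintype.mem_piFinset]
      exact hbound
    have hinj : Set.InjOn f S := by
      intro β hβ β' hβ' heq
      rw [hf] at heq
      simp only [dif_pos hβ, dif_pos hβ'] at heq
      obtain ⟨h1, -⟩ := (key β hβ).choose_spec
      obtain ⟨h2, -⟩ := (key β' hβ').choose_spec
      rw [h1, h2, heq]
    have hcount : S.ncard ≤ F.card := by
      have := Set.ncard_le_ncard_of_injOn f hmaps hinj F.finite_toSet
      rwa [Set.ncard_coe_finset] at this
    have hIcc_card : ((Finset.Icc (-⌊R⌋) ⌊R⌋).card : ℝ) ≤ 2 * R + 1 := by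
      rw [Int.card_Icc]
      have h1 : (0 : ℤ) ≤ ⌊R⌋ + 1 - (-⌊R⌋) := by linarith
      rw [show ((⌊R⌋ + 1 - (-⌊R⌋)).toNat : ℝ) = ((⌊R⌋ + 1 - (-⌊R⌋) : ℤ) : ℝ) by
        exact_mod_cast congrArg (Int.cast : ℤ → ℝ) (Int.toNat_of_nonneg h1)]
      push_cast
      have := Int.floor_le R
      linarith
    have hF_card : (F.card : ℝ) ≤ t * (2 * R + 1) ^ k := by
      rw [hF, Finset.card_product, Fintype.card_piFinset]
      push_cast
      rw [Finset.prod_const, Finset.card_fin]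
      refine mul_le_mul_of_nonneg_left ?_ (Nat.cast_nonneg _)
      exact pow_le_pow_left₀ (Nat.cast_nonneg _) hIcc_card k
    calc (S.ncard : ℝ) ≤ F.card := by exact_mod_cast hcount
      _ ≤ t * (2 * R + 1) ^ k := hF_card
      _ ≤ t * ((4 * D + 1) * SL) ^ k := by
          refine mul_le_mul_of_nonneg_left (pow_le_pow_left₀ (by linarith) ?_ k)
            (Nat.cast_nonneg _)
          have hTle : T ≤ SL := by linarith
          rw [hR]
          nlinarith
      _ = t * (4 * D + 1) ^ k * SL ^ k := by rw [mul_pow]; ring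
      _ ≤ Ξ * SL ^ k := by
          refine mul_le_mul_of_nonneg_right ?_ (pow_nonneg hSL0 k)
          rw [hΞ]
          exact le_add_of_nonneg_left (pow_nonneg (le_of_lt hCe) n)
  refine ⟨⟨Ξ, hΞpos, key1⟩, ?_⟩
  -- Part 2
  have hlog2 : 0 < Real.log 2 := Real.log_pos one_lt_two
  set c : ℝ := Real.log Ξ / Real.log 2 + n with hc
  have hcdiv : 0 < Real.log Ξ / Real.log 2 := div_pos (by linarith) hlog2
  have hcpos : 0 < c := by rw [hc]; linarith
  refine ⟨Ξ * c ^ k, mul_pos hΞpos (pow_pos hcpos k), ?_⟩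
  intro M hM α hα
  have hM1 : (1 : ℝ) ≤ M := by linarith
  have hMn : (0:ℝ) < M ^ n := pow_pos (by linarith) n
  have hlogM : Real.log 2 ≤ Real.log M := Real.log_le_log two_pos hM
  have hlogM0 : 0 ≤ Real.log M := by linarith
  set N : ℝ := ((Algebra.norm ℤ α).natAbs : ℝ) with hNd
  have hN1 : 1 ≤ N := cuo_natAbs_one_le hα
  by_cases hcase : N ≤ Ξ * M ^ n
  · have h1 := key1 M hM1 α hα hcase
    refine h1.trans ?_
    have hSLle : Real.log (Ξ * M ^ n / N) ≤ c * Real.log M := by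
      have h2 : Real.log (Ξ * M ^ n / N) ≤ Real.log (Ξ * M ^ n) := by
        refine Real.log_le_log (div_pos (mul_pos hΞpos hMn) (by linarith)) ?_
        exact div_le_self (le_of_lt (mul_pos hΞpos hMn)) hN1
      have h3 : Real.log (Ξ * M ^ n) = Real.log Ξ + n * Real.log M := by
        rw [Real.log_mul (ne_of_gt hΞpos) (ne_of_gt hMn), Real.log_pow]
      have h4 : Real.log Ξ ≤ Real.log Ξ / Real.log 2 * Real.log M := by
        have h5 : Real.log Ξ / Real.log 2 * Real.log 2 = Real.log Ξ := by
          field_simp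
        nlinarith
      rw [h3] at h2
      calc Real.log (Ξ * M ^ n / N) ≤ Real.log Ξ + n * Real.log M := h2
        _ ≤ Real.log Ξ / Real.log 2 * Real.log M + n * Real.log M := by linarith
        _ = (Real.log Ξ / Real.log 2 + n) * Real.log M := by ring
    have hSL0 : 0 ≤ Real.log (Ξ * M ^ n / N) :=
      Real.log_nonneg ((one_le_div (by linarith)).mpr hcase)
    calc Ξ * Real.log (Ξ * M ^ n / N) ^ k
        ≤ Ξ * (c * Real.log M) ^ k :=
          mul_le_mul_of_nonneg_left (pow_le_pow_left₀ hSL0 hSLle k) (le_of_lt hΞpos)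
      _ = Ξ * c ^ k * Real.log M ^ k := by rw [mul_pow]; ring
  · -- the set is empty
    have hempty : {β : 𝓞 K | Associated α β ∧ ∀ i, |(ω.repr β i : ℝ)| ≤ M} = ∅ := by
      rw [Set.eq_empty_iff_forall_notMem]
      rintro β ⟨hass, hbox⟩
      have hβne : β ≠ 0 := hass.ne_zero_iff.mp hα
      have hwbox : ∀ w : InfinitePlace K, w (β : K) ≤ C * M := by
        intro w
        have hrepr : (β : K) = ∑ i, (ω.repr β i) • ((ω i : 𝓞 K) : K) := by
          nth_rw 1 [← ω.sum_repr β]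
          rw [show ((↑(∑ i, (ω.repr β) i • ω i) : K))
              = algebraMap (𝓞 K) K (∑ i, (ω.repr β) i • ω i) from rfl, map_sum]
          exact Finset.sum_congr rfl fun i _ => by rw [map_zsmul]
        have hsmul : ∀ i, w ((ω.repr β i) • ((ω i : 𝓞 K) : K))
            = |(ω.repr β i : ℝ)| * w ((ω i : 𝓞 K) : K) := by
          intro i
          rw [zsmul_eq_mul, map_mul]
          congr 1
          rw [← norm_embedding_eq, map_intCast, Complex.norm_intCast]
        calc w (β : K) = w (∑ i, (ω.repr β i) • ((ω i : 𝓞 K) : K)) := by rw [← hrepr]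
          _ ≤ ∑ i, w ((ω.repr β i) • ((ω i : 𝓞 K) : K)) := w.1.sum_le _ _
          _ = ∑ i, |(ω.repr β i : ℝ)| * w ((ω i : 𝓞 K) : K) :=
              Finset.sum_congr rfl fun i _ => hsmul i
          _ ≤ ∑ i, M * w ((ω i : 𝓞 K) : K) :=
              Finset.sum_le_sum fun i _ =>
                mul_le_mul_of_nonneg_right (hbox i) (apply_nonneg _ _)
          _ = M * ∑ i, w ((ω i : 𝓞 K) : K) := by rw [Finset.mul_sum]
          _ ≤ M * C := mul_le_mul_of_nonneg_left (hCsum w) (by linarith)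
          _ = C * M := mul_comm _ _
      have h1 := cuo_norm_le_pow hβne hwbox
      rw [← hcard] at h1
      refine hcase ?_
      have h4 : N = ((Algebra.norm ℤ β).natAbs : ℝ) := by
        rw [hNd, cuo_assoc_norm hass]
      rw [h4]
      calc ((Algebra.norm ℤ β).natAbs : ℝ) ≤ (C * M) ^ n := h1
        _ = C ^ n * M ^ n := mul_pow _ _ _
        _ ≤ Ξ * M ^ n := mul_le_mul_of_nonneg_right hΞgeC (le_of_lt hMn)
    rw [hempty]
    simp only [Set.ncard_empty, Nat.cast_zero]
    exact mul_nonneg (mul_nonneg (le_of_lt hΞpos) (pow_nonneg (le_of_lt hcpos) k))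
      (pow_nonneg hlogM0 k)
end

section
/- Slide trick: let n be a positive integer and let the additive group ℤⁿ act simply transitively on a nonempty set 𝕃 (for all l, l' ∈ 𝕃 there is a unique z ∈ ℤⁿ with z·l = l'). Let P and X be finite nonempty subsets of 𝕃, and let 𝒬 be the (finite, nonempty) family of all translates z·P (z ∈ ℤⁿ) that intersect X. Then there exists Q ∈ 𝒬 such that #(Q ∩ X)·#𝒬 ≥ #X·#P; equivalently, #(Q ∩ X)/#Q ≥ #X/#𝒬. -/
/-- The family of all translates of `P` (under the `ℤⁿ`-action) that meet `X`. -/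
def translatesMeeting (n : ℕ) {L : Type*} [DecidableEq L] [AddAction (Fin n → ℤ) L]
    (P X : Finset L) : Set (Finset L) :=
  {Q : Finset L | (∃ z : Fin n → ℤ, Q = P.image fun p => z +ᵥ p) ∧ (Q ∩ X).Nonempty}

/-- **The slide trick.** If `ℤⁿ` acts simply transitively on `𝕃`, `P, X ⊆ 𝕃` are finite and
nonempty, and `𝒬` is the family of translates of `P` meeting `X`, then some `Q ∈ 𝒬` satisfies
`#(Q ∩ X) · #𝒬 ≥ #X · #P`. -/
theorem slide_trick (n : ℕ) {L : Type*} [DecidableEq L] [AddAction (Fin n → ℤ) L]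
    (htrans : ∀ l l' : L, ∃! z : Fin n → ℤ, z +ᵥ l = l')
    (P X : Finset L) (hP : P.Nonempty) (hX : X.Nonempty) :
    ∃ Q ∈ translatesMeeting n P X,
      X.card * P.card ≤ (Q ∩ X).card * (translatesMeeting n P X).ncard := by
  classical
  set tr : L → L → (Fin n → ℤ) := fun l l' => (htrans l l').choose with htr
  have htr_spec : ∀ l l', tr l l' +ᵥ l = l' := fun l l' => (htrans l l').choose_spec.1
  have htr_uniq : ∀ l l' z, z +ᵥ l = l' → z = tr l l' := fun l l' z h =>
    (htrans l l').choose_spec.2 z h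
  set F : (Fin n → ℤ) → Finset L := fun z => P.image fun p => z +ᵥ p with hF
  set S : Finset (Fin n → ℤ) := (X ×ˢ P).image (fun q => tr q.2 q.1) with hS
  have hmemS : ∀ z, z ∈ S ↔ (F z ∩ X).Nonempty := by
    intro z
    simp only [hS, Finset.mem_image, Finset.mem_product, Finset.Nonempty, Finset.mem_inter]
    constructor
    · rintro ⟨⟨x, p⟩, ⟨hx, hp⟩, rfl⟩
      exact ⟨x, Finset.mem_image.2 ⟨p, hp, htr_spec p x⟩, hx⟩
    · rintro ⟨x, hx1, hx2⟩
      obtain ⟨p, hp, hpx⟩ := Finset.mem_image.1 hx1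
      exact ⟨(x, p), ⟨hx2, hp⟩, (htr_uniq p x z hpx).symm⟩
  -- injectivity of z ↦ z · P
  have hinj : Function.Injective F := by
    intro z z' h
    set w : Fin n → ℤ := z' - z with hw
    have hstep : ∀ q ∈ F z, w +ᵥ q ∈ F z := by
      intro q hq
      obtain ⟨p, hp, rfl⟩ := Finset.mem_image.1 hq
      have e : w +ᵥ (z +ᵥ p) = z' +ᵥ p := by
        rw [vadd_vadd]
        congr 1
        rw [hw]
        abel
      rw [e, h]
      exact Finset.mem_image.2 ⟨p, hp, rfl⟩
    obtain ⟨p0, hp0⟩ := hP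
    have hmemk : ∀ k : ℕ, (k • w) +ᵥ (z +ᵥ p0) ∈ F z := by
      intro k
      induction k with
      | zero =>
          have hm : (z +ᵥ p0 : L) ∈ F z := Finset.mem_image_of_mem _ hp0
          simpa using hm
      | succ k ih =>
          have e : ((k + 1) • w) +ᵥ (z +ᵥ p0) = w +ᵥ ((k • w) +ᵥ (z +ᵥ p0)) := by
            have e1 : (k + 1) • w = w + k • w := by
              rw [add_nsmul, one_nsmul, add_comm]
            rw [e1, add_vadd]
          rw [e]
          exact hstep _ ih
    obtain ⟨a, -, b, -, hne, hab⟩ :=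
      Finset.exists_ne_map_eq_of_card_lt_of_maps_to
        (s := Finset.range ((F z).card + 1)) (t := F z)
        (f := fun k : ℕ => ((k • w) +ᵥ (z +ᵥ p0) : L))
        (by simp) (fun k _ => hmemk k)
    have key : ∀ a b : ℕ, a < b →
        ((a • w) +ᵥ (z +ᵥ p0) : L) = (b • w) +ᵥ (z +ᵥ p0) → w = 0 := by
      intro a b hlt heq
      have e1 : (b - a) • w + a • w = b • w := by
        rw [← add_nsmul, Nat.sub_add_cancel hlt.le]
      have h2 : ((b - a) • w) +ᵥ ((a • w) +ᵥ (z +ᵥ p0)) = (a • w) +ᵥ (z +ᵥ p0) := by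
        rw [vadd_vadd, e1, ← heq]
      have h3 : (0 : Fin n → ℤ) +ᵥ ((a • w) +ᵥ (z +ᵥ p0)) = (a • w) +ᵥ (z +ᵥ p0) :=
        zero_vadd _ _
      have h4 : (b - a) • w = (0 : Fin n → ℤ) := by
        rw [htr_uniq _ _ _ h2, htr_uniq _ _ _ h3]
      have hba : b - a ≠ 0 := Nat.sub_ne_zero_of_lt hlt
      funext i
      have h5 := congrFun h4 i
      simp only [Pi.smul_apply, Pi.zero_apply, nsmul_eq_mul] at h5
      have h6 : ((b - a : ℕ) : ℤ) * w i = 0 := by exact_mod_cast h5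
      rcases mul_eq_zero.1 h6 with h' | h'
      · exact absurd (Nat.cast_eq_zero.1 h') hba
      · exact h'
    have hw0 : w = 0 := by
      rcases lt_or_gt_of_ne hne with hlt | hlt
      · exact key a b hlt hab
      · exact key b a hlt hab.symm
    have hzz : z' - z = 0 := hw ▸ hw0
    have : z' = z := sub_eq_zero.1 hzz
    exact this.symm
  -- the family equals the coercion of S.image F
  have hfam : translatesMeeting n P X = ↑(S.image F) := by
    ext Q
    simp only [translatesMeeting, Set.mem_setOf_eq, Finset.coe_image, Set.mem_image,
      Finset.mem_coe]
    constructor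
    · rintro ⟨⟨z, rfl⟩, hne⟩
      exact ⟨z, (hmemS z).2 hne, rfl⟩
    · rintro ⟨z, hz, rfl⟩
      exact ⟨⟨z, rfl⟩, (hmemS z).1 hz⟩
  have hncard : (translatesMeeting n P X).ncard = S.card := by
    rw [hfam, Set.ncard_coe_finset, Finset.card_image_of_injective _ hinj]
  -- double counting
  have hcount : ∀ x ∈ X, (S.filter fun z => x ∈ F z) = P.image fun p => tr p x := by
    intro x hx
    ext z
    simp only [Finset.mem_filter, Finset.mem_image]
    constructor
    · rintro ⟨hzS, hxz⟩
      obtain ⟨p, hp, hpx⟩ := Finset.mem_image.1 hxz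
      exact ⟨p, hp, (htr_uniq p x z hpx).symm⟩
    · rintro ⟨p, hp, rfl⟩
      have hxF : x ∈ F (tr p x) := Finset.mem_image.2 ⟨p, hp, htr_spec p x⟩
      exact ⟨(hmemS _).2 ⟨x, Finset.mem_inter.2 ⟨hxF, hx⟩⟩, hxF⟩
  have htrinj : ∀ x, Function.Injective fun p : L => tr p x := by
    intro x p p' h
    have h' : tr p x = tr p' x := h
    have h1 : tr p x +ᵥ p = x := htr_spec p x
    have h2 : tr p x +ᵥ p' = x := by rw [h']; exact htr_spec p' x
    exact AddAction.injective (tr p x) (h1.trans h2.symm)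
  have hsum : ∑ z ∈ S, (F z ∩ X).card = X.card * P.card := by
    have h1 : ∀ z, (F z ∩ X).card = ∑ x ∈ X, if x ∈ F z then 1 else 0 := by
      intro z
      rw [← Finset.card_filter, Finset.filter_mem_eq_inter, Finset.inter_comm]
    calc ∑ z ∈ S, (F z ∩ X).card
        = ∑ z ∈ S, ∑ x ∈ X, if x ∈ F z then 1 else 0 := by
          exact Finset.sum_congr rfl fun z _ => h1 z
      _ = ∑ x ∈ X, ∑ z ∈ S, if x ∈ F z then 1 else 0 := Finset.sum_comm
      _ = ∑ x ∈ X, (S.filter fun z => x ∈ F z).card := by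
          exact Finset.sum_congr rfl fun x _ => (Finset.card_filter _ _).symm
      _ = ∑ x ∈ X, P.card := by
          refine Finset.sum_congr rfl fun x hx => ?_
          rw [hcount x hx, Finset.card_image_of_injective _ (htrinj x)]
      _ = X.card * P.card := by rw [Finset.sum_const, smul_eq_mul]
  -- S is nonempty
  have hSne : S.Nonempty := by
    obtain ⟨x, hx⟩ := hX
    obtain ⟨p, hp⟩ := hP
    exact ⟨tr p x, Finset.mem_image.2 ⟨(x, p), Finset.mem_product.2 ⟨hx, hp⟩, rfl⟩⟩
  -- pigeonhole: pick the best translate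
  obtain ⟨z0, hz0S, hz0max⟩ := S.exists_max_image (fun z => (F z ∩ X).card) hSne
  refine ⟨F z0, ?_, ?_⟩
  · rw [hfam]
    exact Finset.mem_coe.2 (Finset.mem_image.2 ⟨z0, hz0S, rfl⟩)
  · rw [hncard]
    calc X.card * P.card = ∑ z ∈ S, (F z ∩ X).card := hsum.symm
      _ ≤ S.card • (F z0 ∩ X).card :=
          Finset.sum_le_card_nsmul S _ _ fun z hz => hz0max z hz
      _ = (F z0 ∩ X).card * S.card := by rw [smul_eq_mul, mul_comm]
end

section
/- Let F(x,y) = ax² + bxy + cy² with a, b, c ∈ ℤ, gcd(a,b,c) = 1, and suppose D_F = b² − 4ac is not a perfect square. Then there exist: a number field K with [K:ℚ] = 2 containing an element θ with θ² = D_F; a subring 𝒪 ⊆ K that is free of rank 2 as a ℤ-module (an order in K); an ideal 𝔠 of 𝒪 that is invertible, i.e. there exists an 𝒪-submodule 𝔡 of K with 𝔠·𝔡 = 𝒪 as 𝒪-submodules of K; a ℤ-basis (γ₁, γ₂) of 𝔠; and ε ∈ {1, −1}; such that for all x, y ∈ ℤ: N_{K/ℚ}(γ₁·x + γ₂·y)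 = ε · #(𝒪/𝔠) · F(x,y) in ℚ. -/
open Polynomial


set_option synthInstance.maxHeartbeats 400000
set_option maxHeartbeats 1000000

/-- The property that the primitive binary quadratic form `a x² + b x y + c y²` is realized,
inside the number field `K`, as `ε⁻¹·𝐍(𝔠)⁻¹` times the norm form of a `ℤ`-basis `(γ₁, γ₂)`
of an invertible ideal `𝔠` of an order `𝒪` of `K`. -/
def IsQuadFormIdealNormRepresentation (a b c : ℤ) (K : Type) [Field K] [NumberField K] :
    Prop :=
  Module.finrank ℚ K = 2 ∧
  (∃ θ : K, θ ^ 2 = ((b ^ 2 - 4 * a * c : ℤ) : K)) ∧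
  ∃ O : Subalgebra ℤ K, Module.Free ℤ O ∧ Module.finrank ℤ O = 2 ∧
    ∃ I : Submodule O K,
      (I : Set K) ⊆ (O : Set K) ∧
      (∃ J : Submodule O K, I * J = 1) ∧
      ∃ γ₁ γ₂ : K, γ₁ ∈ I ∧ γ₂ ∈ I ∧
        (∀ z ∈ I, ∃! p : ℤ × ℤ, z = p.1 • γ₁ + p.2 • γ₂) ∧
        ∃ ε : ℤ, (ε = 1 ∨ ε = -1) ∧
          ∀ x y : ℤ,
            Algebra.norm ℚ ((x : K) * γ₁ + (y : K) * γ₂) =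
              (ε : ℚ) * (Nat.card (O ⧸ Submodule.comap (Algebra.linearMap O K) I) : ℚ) *
                ((a * x ^ 2 + b * x * y + c * y ^ 2 : ℤ) : ℚ)


open Polynomial in
private theorem qfinf_rat_nonsquare (n : ℤ) (h : ¬∃ m : ℤ, n = m ^ 2) :
    ∀ r : ℚ, r ^ 2 ≠ (n : ℚ) := by
  intro r hr
  have h2 : (r ^ 2).den = 1 := by rw [hr]; exact Rat.den_intCast n
  rw [Rat.den_pow] at h2
  have hden : r.den = 1 := by nlinarith [r.pos]
  have : r = (r.num : ℚ) := by rw [← Rat.num_div_den r, hden]; simp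
  apply h
  refine ⟨r.num, ?_⟩
  have : ((r.num ^ 2 : ℤ) : ℚ) = (n : ℚ) := by
    rw [← hr]; nth_rewrite 2 [this]; push_cast; ring
  exact_mod_cast this.symm

open Polynomial in
private theorem qfinf_f_irred (d : ℚ) (hd : ∀ r : ℚ, r ^ 2 ≠ d) :
    Irreducible ((X : ℚ[X]) ^ 2 - C d) :=
  X_pow_sub_C_irreducible_of_prime Nat.prime_two hd

set_option maxHeartbeats 8000000 in
set_option synthInstance.maxHeartbeats 2000000 in
/-- **Correspondence between primitive binary quadratic forms and invertible ideals of orders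
in quadratic fields.** A primitive non-degenerate binary quadratic form `F` is, up to a sign
`ε` and the factor `#(𝒪/𝔠)`, the norm form of a `ℤ`-basis of an invertible ideal `𝔠` of an
order `𝒪` in the quadratic field `ℚ(√D_F)`. -/
theorem quadratic_form_is_ideal_norm_form
    (a b c : ℤ) (hprim : Int.gcd a (Int.gcd b c : ℤ) = 1)
    (hD : ¬∃ m : ℤ, b ^ 2 - 4 * a * c = m ^ 2) :
    ∃ (K : Type) (fK : Field K) (nK : @NumberField K fK),
      @IsQuadFormIdealNormRepresentation a b c K fK nK := by
  have ha : a ≠ 0 := by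
    intro ha0
    exact hD ⟨b, by rw [ha0]; ring⟩
  set d : ℚ := ((b ^ 2 - 4 * a * c : ℤ) : ℚ) with hdval
  have hd : ∀ r : ℚ, r ^ 2 ≠ d := qfinf_rat_nonsquare _ hD
  have hdval : d = ((b ^ 2 - 4 * a * c : ℤ) : ℚ) := rfl

  haveI : Fact (Irreducible ((X : ℚ[X]) ^ 2 - C d)) := ⟨qfinf_f_irred d hd⟩
  set f : ℚ[X] := (X : ℚ[X]) ^ 2 - C d with hf
  have hfne : f ≠ 0 := (qfinf_f_irred d hd).ne_zero
  let K := AdjoinRoot f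
  let θ : K := AdjoinRoot.root f
  have hθ : θ ^ 2 = algebraMap ℚ K d := by
    have := AdjoinRoot.eval₂_root f
    simp only [hf, eval₂_sub, eval₂_pow, eval₂_X, eval₂_C] at this
    rw [sub_eq_zero] at this
    simpa [AdjoinRoot.algebraMap_eq] using this
  let P : PowerBasis ℚ K := AdjoinRoot.powerBasis hfne
  have hdim : P.dim = 2 := by
    show f.natDegree = 2
    rw [hf]; compute_degree!
  have hrank : Module.finrank ℚ K = 2 := by rw [P.finrank, hdim]
  haveI : NumberField K := by
    haveI : FiniteDimensional ℚ K := P.finite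
    exact ⟨⟩
  -- basis
  let B : Module.Basis (Fin 2) ℚ K := P.basis.reindex (finCongr hdim)
  have hB0 : B 0 = 1 := by
    simp [B, Module.Basis.reindex_apply, P.basis_eq_pow]
  have hB1 : B 1 = θ := by
    simp [B, Module.Basis.reindex_apply, P.basis_eq_pow]
    exact AdjoinRoot.powerBasis_gen hfne
  -- norm formula
  have hrepr : ∀ u v : ℚ, ∀ i, B.repr (u • B 0 + v • B 1) i = ![u, v] i := by
    intro u v i
    simp [map_add, map_smul, Module.Basis.repr_self, Finsupp.single_apply]
    fin_cases i <;> simp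
  have hnorm : ∀ u v : ℚ, Algebra.norm ℚ (u • (1:K) + v • θ) = u ^ 2 - d * v ^ 2 := by
    intro u v
    rw [← hB0, ← hB1, Algebra.norm_eq_matrix_det B]
    have hM : Algebra.leftMulMatrix B (u • B 0 + v • B 1) = !![u, d * v; v, u] := by
      ext i j
      rw [Algebra.leftMulMatrix_eq_repr_mul]
      fin_cases j
      · show B.repr ((u • B 0 + v • B 1) * B 0) i = !![u, d * v; v, u] i 0
        have : (u • B 0 + v • B 1) * B 0 = u • B 0 + v • B 1 := by rw [hB0]; ring
        rw [this]
        fin_cases i <;> simpa using hrepr u v _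
      · show B.repr ((u • B 0 + v • B 1) * B 1) i = !![u, d * v; v, u] i 1
        have : (u • B 0 + v • B 1) * B 1 = (d * v) • B 0 + u • B 1 := by
          rw [hB0, hB1, add_mul, smul_mul_assoc, one_mul, smul_mul_assoc, ← pow_two, hθ,
            Algebra.algebraMap_eq_smul_one, smul_smul, mul_comm v d]
          abel
        rw [this]
        fin_cases i <;> simpa using hrepr (d*v) u _
    rw [hM, Matrix.det_fin_two_of]
    ring
  have huniq : ∀ u v u' v' : ℚ, u • (1:K) + v • θ = u' • (1:K) + v' • θ → u = u' ∧ v = v' := by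
    intro u v u' v' h
    rw [← hB0, ← hB1] at h
    have h0 := congrArg (fun z => B.repr z 0) h
    have h1 := congrArg (fun z => B.repr z 1) h
    simp only [hrepr] at h0 h1
    simp at h0 h1
    exact ⟨h0, h1⟩
  -- ω and the order
  letI : Field K := inferInstance
  let ω : K := ((b : K) + θ) / 2
  have hωform : ω = ((b : ℚ)/2) • (1:K) + (2⁻¹ : ℚ) • θ := by
    show ((b : K) + θ) / 2 = _
    simp only [Algebra.smul_def, mul_one, eq_ratCast]
    push_cast
    ring
  have hθd : θ ^ 2 = ((b ^ 2 - 4 * a * c : ℤ) : K) := by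
    rw [hθ, hdval, eq_ratCast]
    push_cast
    ring
  have hω2 : ω ^ 2 = (b : K) * ω - ((a * c : ℤ) : K) := by
    have h2 : (2 : K) ≠ 0 := two_ne_zero
    have hωe : ω * 2 = (b:K) + θ := by
      show ((b:K)+θ)/2 * 2 = _
      field_simp
    push_cast at hθd
    have key : ω^2 * 4 = ((b:K)*ω - ((a:K)*(c:K))) * 4 := by
      have e1 : ω^2*4 = (ω*2)^2 := by ring
      have e2 : ((b:K)*ω - (a:K)*(c:K))*4 = 2*(b:K)*(ω*2) - 4*((a:K)*(c:K)) := by ring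
      rw [e1, e2, hωe]
      linear_combination hθd
    have h4 := mul_right_cancel₀ (by norm_num : (4:K) ≠ 0) key
    push_cast
    exact h4
  -- key coordinate lemma over ℤ
  have hcoord : ∀ u v u' v' : ℤ, (u : K) + (v : K) * ω = (u' : K) + (v' : K) * ω →
      u = u' ∧ v = v' := by
    intro u v u' v' h
    have hform : ∀ u v : ℤ, (u : K) + (v : K) * ω =
        ((u : ℚ) + (v : ℚ) * ((b : ℚ)/2)) • (1:K) + ((v : ℚ) * 2⁻¹) • θ := by
      intro u v
      rw [hωform]
      simp only [Algebra.smul_def, mul_one, eq_ratCast]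
      push_cast
      ring
    rw [hform, hform] at h
    obtain ⟨h1, h2⟩ := huniq _ _ _ _ h
    have hv : (v : ℚ) = (v' : ℚ) := by
      field_simp at h2; exact_mod_cast h2
    have hv' : v = v' := by exact_mod_cast hv
    refine ⟨?_, hv'⟩
    rw [hv] at h1
    have : (u : ℚ) = u' := by linarith
    exact_mod_cast this
  -- the order O
  let O : Subalgebra ℤ K := Algebra.adjoin ℤ {ω}
  have hωO : ω ∈ O := Algebra.self_mem_adjoin_singleton ℤ ω
  have hintO : ∀ n : ℤ, (n : K) ∈ O := fun n => by
    simpa using Subalgebra.intCast_mem O n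
  have hmemO : ∀ z : K, z ∈ O ↔ ∃ u v : ℤ, z = (u : K) + (v : K) * ω := by
    intro z
    constructor
    · intro hz
      induction hz using Algebra.adjoin_induction with
      | mem x hx =>
        rcases hx with rfl
        exact ⟨0, 1, by push_cast; ring⟩
      | algebraMap n => exact ⟨n, 0, by push_cast; simp⟩
      | add x y hx hy ihx ihy =>
        obtain ⟨u, v, rfl⟩ := ihx
        obtain ⟨u', v', rfl⟩ := ihy
        exact ⟨u + u', v + v', by push_cast; ring⟩
      | mul x y hx hy ihx ihy =>
        obtain ⟨u, v, rfl⟩ := ihx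
        obtain ⟨u', v', rfl⟩ := ihy
        refine ⟨u * u' - v * v' * (a * c), u * v' + v * u' + v * v' * b, ?_⟩
        push_cast
        push_cast at hω2
        linear_combination ((v : K) * (v' : K)) * hω2
    · rintro ⟨u, v, rfl⟩
      exact add_mem (hintO u) (mul_mem (hintO v) hωO)
  -- ℤ-basis of O
  let L : (Fin 2 → ℤ) →ₗ[ℤ] O :=
    { toFun := fun g => ⟨(g 0 : K) + (g 1 : K) * ω,
        add_mem (hintO (g 0)) (mul_mem (hintO (g 1)) hωO)⟩
      map_add' := fun g h => by
        ext
        push_cast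
        simp only [Pi.add_apply]
        push_cast
        ring
      map_smul' := fun n g => by
        ext
        push_cast
        simp only [Pi.smul_apply, smul_eq_mul]
        push_cast
        simp [Subalgebra.coe_smul]  -- may need adjusting
        ring }
  have hLbij : Function.Bijective L := by
    constructor
    · intro g h hgh
      have : (g 0 : K) + (g 1 : K) * ω = (h 0 : K) + (h 1 : K) * ω :=
        congrArg Subtype.val hgh
      obtain ⟨h0, h1⟩ := hcoord _ _ _ _ this
      funext i
      fin_cases i <;> assumption
    · rintro ⟨z, hz⟩
      obtain ⟨u, v, rfl⟩ := (hmemO z).mp hz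
      exact ⟨![u, v], rfl⟩
  let eL : (Fin 2 → ℤ) ≃ₗ[ℤ] O := LinearEquiv.ofBijective L hLbij
  let β : Module.Basis (Fin 2) ℤ O := Module.Basis.ofEquivFun eL.symm
  have hfree : Module.Free ℤ O := Module.Free.of_basis β
  have hrankO : Module.finrank ℤ O = 2 := by
    rw [Module.finrank_eq_card_basis β, Fintype.card_fin]
  push_cast at hω2
  have hθdp := hθd
  push_cast at hθdp
  have haK : (a : K) ≠ 0 := Int.cast_ne_zero.mpr ha
  -- the ideal I with Z-carrier Mz
  let Mz : Submodule ℤ K := Submodule.span ℤ {((a : ℤ) : K), ω}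
  have hMz : ∀ z : K, z ∈ Mz ↔ ∃ m n : ℤ, (m : K) * (a : K) + (n : K) * ω = z := by
    intro z
    rw [Submodule.mem_span_pair]
    constructor
    · rintro ⟨m, n, rfl⟩; exact ⟨m, n, by simp [zsmul_eq_mul]⟩
    · rintro ⟨m, n, rfl⟩; exact ⟨m, n, by simp [zsmul_eq_mul]⟩
  let I : Submodule O K :=
    { carrier := Mz
      add_mem' := fun h1 h2 => Mz.add_mem h1 h2
      zero_mem' := Mz.zero_mem
      smul_mem' := by
        rintro o z hz
        obtain ⟨u, v, ho⟩ := (hmemO (o : K)).mp o.2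
        obtain ⟨m, n, rfl⟩ := (hMz z).mp hz
        show _ ∈ Mz
        rw [Algebra.smul_def]
        have halg : algebraMap O K o = (o : K) := rfl
        rw [halg, ho]
        refine (hMz _).mpr ⟨u * m - v * n * c, u * n + v * m * a + v * n * b, ?_⟩
        push_cast
        linear_combination (-(v : K) * (n : K) / 4) * hθdp }
  have hIMz : ∀ z : K, z ∈ I ↔ ∃ m n : ℤ, (m : K) * (a : K) + (n : K) * ω = z := hMz
  have hIsub : (I : Set K) ⊆ (O : Set K) := by
    intro z hz
    obtain ⟨m, n, rfl⟩ := (hIMz z).mp hz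
    exact add_mem (mul_mem (hintO m) (hintO a)) (mul_mem (hintO n) hωO)
  -- the inverse module J
  let τ : K := ((b : K) - ω) / (a : K)
  let J : Submodule O K := Submodule.span O {1, τ}
  have hτmul : ∀ m n : ℤ, ((m : K) * (a : K) + (n : K) * ω) * τ =
      ((m * b + n * c : ℤ) : K) - (m : K) * ω := by
    intro m n
    show _ * (((b : K) - ω) / (a : K)) = _
    rw [← mul_div_assoc, div_eq_iff haK]
    push_cast
    linear_combination (-(n : K) / 4) * hθdp
  have hle : I * J ≤ 1 := by
    rw [Submodule.mul_le]
    intro i hi j hj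
    obtain ⟨m, n, hi'⟩ := (hIMz i).mp hi
    obtain ⟨o₁, o₂, hj'⟩ := Submodule.mem_span_pair.mp hj
    have hiO : i ∈ O := hIsub hi
    have hiτO : i * τ ∈ O := by
      rw [← hi', hτmul]
      exact sub_mem (hintO _) (mul_mem (hintO m) hωO)
    rw [Submodule.mem_one]
    refine ⟨o₁ * ⟨i, hiO⟩ + o₂ * ⟨i * τ, hiτO⟩, ?_⟩
    have : algebraMap O K (o₁ * ⟨i, hiO⟩ + o₂ * ⟨i * τ, hiτO⟩)
        = (o₁ : K) * i + (o₂ : K) * (i * τ) := rfl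
    rw [this, ← hj']
    have h1 : (o₁ : K) = algebraMap O K o₁ := rfl
    have h2 : (o₂ : K) = algebraMap O K o₂ := rfl
    rw [h1, h2, ← Algebra.smul_def, ← Algebra.smul_def, mul_add, mul_smul_comm, mul_smul_comm,
      mul_one]
  have hge : (1 : Submodule O K) ≤ I * J := by
    rw [Submodule.one_le]
    have haI : (a : K) ∈ I := (hIMz _).mpr ⟨1, 0, by push_cast; ring⟩
    have hωI : ω ∈ I := (hIMz _).mpr ⟨0, 1, by push_cast; ring⟩
    have h1J : (1 : K) ∈ J := Submodule.subset_span (by simp)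
    have hτJ : τ ∈ J := Submodule.subset_span (by simp)
    have hA : (a : K) ∈ I * J := by
      simpa using Submodule.mul_mem_mul haI h1J
    have hW : ω ∈ I * J := by
      simpa using Submodule.mul_mem_mul hωI h1J
    have hWb : (b : K) - ω ∈ I * J := by
      have := Submodule.mul_mem_mul haI hτJ
      have he : (a : K) * τ = (b : K) - ω := by
        show (a : K) * (((b : K) - ω) / (a : K)) = _
        field_simp
      rwa [he] at this
    have hB : (b : K) ∈ I * J := by
      have := add_mem hW hWb
      simpa using this
    have hC : (c : K) ∈ I * J := by
      have := Submodule.mul_mem_mul hωI hτJ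
      have he : ω * τ = (c : K) := by
        show ω * (((b : K) - ω) / (a : K)) = _
        rw [← mul_div_assoc, div_eq_iff haK]
        linear_combination (-(1:K)/4) * hθdp
      rwa [he] at this
    -- Bezout
    have hg1 : (Int.gcd a (Int.gcd b c : ℤ) : ℤ)
        = a * Int.gcdA a (Int.gcd b c : ℤ) + (Int.gcd b c : ℤ) * Int.gcdB a (Int.gcd b c : ℤ) :=
      Int.gcd_eq_gcd_ab _ _
    have hg2 : (Int.gcd b c : ℤ) = b * Int.gcdA b c + c * Int.gcdB b c := Int.gcd_eq_gcd_ab _ _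
    set x := Int.gcdA a (Int.gcd b c : ℤ)
    set y := Int.gcdB a (Int.gcd b c : ℤ)
    set z := Int.gcdA b c
    set w := Int.gcdB b c
    have hBez : a * x + b * (z * y) + c * (w * y) = 1 := by
      rw [hprim] at hg1
      rw [hg2] at hg1
      push_cast at hg1
      linear_combination -hg1
    have hmem1 : ((a * x + b * (z * y) + c * (w * y) : ℤ) : K) ∈ I * J := by
      have m1 := Submodule.smul_of_tower_mem (I * J) x hA
      have m2 := Submodule.smul_of_tower_mem (I * J) (z * y) hB
      have m3 := Submodule.smul_of_tower_mem (I * J) (w * y) hC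
      rw [zsmul_eq_mul] at m1 m2 m3
      rw [mul_comm ((x : ℤ) : K)] at m1
      rw [mul_comm (((z * y) : ℤ) : K)] at m2
      rw [mul_comm (((w * y) : ℤ) : K)] at m3
      push_cast at m1 m2 m3 ⊢
      exact add_mem (add_mem m1 m2) m3
    rw [hBez] at hmem1
    simpa using hmem1
  have hIJ : I * J = 1 := le_antisymm hle hge
  -- cardinality of O / I
  have hcard : Nat.card (O ⧸ Submodule.comap (Algebra.linearMap O K) I) = a.natAbs := by
    set I' : Submodule O O := Submodule.comap (Algebra.linearMap O K) I with hI'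
    show Nat.card (O ⧸ I') = a.natAbs
    let c0 : O →ₗ[ℤ] ℤ := (LinearMap.proj 0).comp eL.symm.toLinearMap
    let q : O →ₗ[ℤ] ℤ ⧸ (Ideal.span {a} : Ideal ℤ) :=
      (Ideal.span {a} : Ideal ℤ).mkQ.comp c0
    have hc0 : ∀ g : Fin 2 → ℤ, c0 (L g) = g 0 := by
      intro g
      have h1 : eL.symm (L g) = g := by
        have h2 : eL g = L g := rfl
        rw [← h2, eL.symm_apply_apply]
      simp only [c0, LinearMap.comp_apply, LinearEquiv.coe_toLinearMap, h1, LinearMap.proj_apply]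
    have hqsurj : Function.Surjective q := by
      intro t
      obtain ⟨n, rfl⟩ := Submodule.mkQ_surjective _ t
      exact ⟨L ![n, 0], by simp only [q, LinearMap.comp_apply, hc0]; rfl⟩
    have hcoeL : ∀ o : O, (o : K) = ((eL.symm o 0 : ℤ) : K) + ((eL.symm o 1 : ℤ) : K) * ω := by
      intro o
      have h2 : L (eL.symm o) = o := by
        have := eL.apply_symm_apply o
        exact this
      conv_lhs => rw [← h2]
      rfl
    have hker : LinearMap.ker q = I'.restrictScalars ℤ := by
      ext o
      rw [LinearMap.mem_ker]
      have hqo : q o = Submodule.Quotient.mk (c0 o) := rfl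
      rw [hqo, Submodule.Quotient.mk_eq_zero, Ideal.mem_span_singleton]
      have hc0o : c0 o = eL.symm o 0 := by
        simp only [c0, LinearMap.comp_apply, LinearEquiv.coe_toLinearMap, LinearMap.proj_apply]
      rw [hc0o]
      constructor
      · rintro ⟨m, hm⟩
        show algebraMap O K o ∈ I
        have : algebraMap O K o = (o : K) := rfl
        rw [this, hcoeL o, hm]
        exact (hIMz _).mpr ⟨m, eL.symm o 1, by push_cast; ring⟩
      · intro hmem
        have : (o : K) ∈ I := hmem
        obtain ⟨m, n, hmn⟩ := (hIMz _).mp this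
        rw [hcoeL o] at hmn
        have : ((m * a : ℤ) : K) + (n : K) * ω
            = ((eL.symm o 0 : ℤ) : K) + ((eL.symm o 1 : ℤ) : K) * ω := by
          push_cast
          push_cast at hmn
          linear_combination hmn
        obtain ⟨h1, _⟩ := hcoord _ _ _ _ this
        exact ⟨m, by rw [← h1, mul_comm]⟩
    have e2 : (O ⧸ I'.restrictScalars ℤ) ≃ₗ[ℤ] ℤ ⧸ (Ideal.span {a} : Ideal ℤ) :=
      (Submodule.quotEquivOfEq _ _ hker.symm).trans (q.quotKerEquivOfSurjective hqsurj)
    have e1 : (O ⧸ I'.restrictScalars ℤ) ≃ₗ[ℤ] (O ⧸ I') :=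
      Submodule.Quotient.restrictScalarsEquiv ℤ I'
    rw [← Nat.card_congr e1.toEquiv, Nat.card_congr e2.toEquiv,
      Nat.card_congr (Int.quotientSpanEquivZMod a).toEquiv, Nat.card_zmod]
  -- unique representation
  have haI : (a : K) ∈ I := (hIMz _).mpr ⟨1, 0, by push_cast; ring⟩
  have hωI : ω ∈ I := (hIMz _).mpr ⟨0, 1, by push_cast; ring⟩
  have hrep : ∀ z ∈ I, ∃! p : ℤ × ℤ, z = p.1 • (a : K) + p.2 • ω := by
    intro z hz
    obtain ⟨m, n, hmn⟩ := (hIMz z).mp hz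
    refine ⟨(m, n), by rw [← hmn]; simp [zsmul_eq_mul], ?_⟩
    rintro ⟨m', n'⟩ hp
    simp only [zsmul_eq_mul] at hp
    have : ((m' * a : ℤ) : K) + (n' : K) * ω = ((m * a : ℤ) : K) + (n : K) * ω := by
      push_cast
      push_cast at hp hmn
      linear_combination -hp - hmn
    obtain ⟨h1, h2⟩ := hcoord _ _ _ _ this
    have hm : m' = m := by
      have := mul_right_cancel₀ ha h1
      exact this
    simp [hm, h2]
  -- sign
  have hsign : a.sign = 1 ∨ a.sign = -1 := by
    rcases lt_trichotomy a 0 with h | h | h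
    · right; exact Int.sign_eq_neg_one_of_neg h
    · exact absurd h ha
    · left; exact Int.sign_eq_one_of_pos h
  have hεa : ((a.sign : ℤ) : ℚ) * ((a.natAbs : ℕ) : ℚ) = (a : ℚ) := by
    rw [← Int.cast_natCast, ← Int.cast_mul, Int.sign_mul_natAbs]
  -- the norm computation
  have hnormF : ∀ x y : ℤ, Algebra.norm ℚ ((x : K) * (a : K) + (y : K) * ω) =
      (a.sign : ℚ) * (a.natAbs : ℚ) * ((a * x ^ 2 + b * x * y + c * y ^ 2 : ℤ) : ℚ) := by
    intro x y
    have hx : (x : K) * (a : K) + (y : K) * ω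
        = ((x * a + y * (b / 2) : ℚ)) • (1 : K) + ((y / 2 : ℚ)) • θ := by
      rw [hωform]
      simp only [Algebra.smul_def, mul_one, eq_ratCast]
      push_cast
      ring
    rw [hx, hnorm, hεa, hdval]
    push_cast
    ring
  refine ⟨K, inferInstance, inferInstance, ?_⟩
  refine ⟨hrank, ⟨θ, hθd⟩, O, hfree, hrankO, I, hIsub, ⟨J, hIJ⟩, (a : K), ω, haI, hωI, hrep,
    a.sign, hsign, ?_⟩
  intro x y
  rw [hnormF x y]
  erw [hcard]
end

section
/- Let K be a number field, let 𝒪 be an order in K, let 𝔠 be an invertible fractional ideal of 𝒪 and let 𝔡 ⊆ 𝒪 be a nonzero ideal. Then the quotient 𝒪-module 𝔠/(𝔠·𝔡) is isomorphic, as an 𝒪-module, to 𝒪/𝔡; in particular 𝔠/(𝔠·𝔡) is generated by a single element. -/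
set_option synthInstance.maxHeartbeats 1000000
set_option maxHeartbeats 2000000

open Submodule

section Aux

variable {K : Type*} [Field K] {O : Subalgebra ℤ K}

private lemma Finj : Function.Injective (Algebra.linearMap O K) :=
  Subtype.val_injective

private lemma map_le_one' (c : Ideal O) :
    Submodule.map (Algebra.linearMap O K) c ≤ 1 := by
  rw [Submodule.one_eq_range]
  rintro x ⟨a, -, rfl⟩
  exact ⟨a, rfl⟩

/-- Avoidance: given an invertible submodule `I` and a finite set of maximal ideals,
there is `x ∈ I` avoiding `I * m` for each of them. -/
private lemma avoid (I J : Submodule O K) (hIJ : I * J = 1)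
    (s : Finset (Ideal O)) (hs : ∀ m ∈ s, m.IsMaximal) :
    ∃ x ∈ I, ∀ m ∈ s, x ∉ I * Submodule.map (Algebra.linearMap O K) m := by
  classical
  induction s using Finset.induction_on with
  | empty => exact ⟨0, I.zero_mem, by simp⟩
  | @insert m' s hm's ih =>
    obtain ⟨x, hxI, hx⟩ := ih fun m hm => hs m (Finset.mem_insert_of_mem hm)
    have hm'max : m'.IsMaximal := hs m' (Finset.mem_insert_self _ _)
    have hne : ¬ (I * Submodule.map (Algebra.linearMap O K) (s.prod id) ≤
        I * Submodule.map (Algebra.linearMap O K) m') := by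
      intro hle
      have h2 := mul_le_mul_right hle J
      rw [← mul_assoc, ← mul_assoc, mul_comm J I, hIJ, Submodule.one_mul, Submodule.one_mul] at h2
      have h3 : s.prod id ≤ m' :=
        (Submodule.map_le_map_iff_of_injective Finj _ _).mp h2
      obtain ⟨m, hm, hmm'⟩ := hm'max.isPrime.prod_le.mp h3
      exact hm's (((hs m (Finset.mem_insert_of_mem hm)).eq_of_le hm'max.ne_top hmm') ▸ hm)
    obtain ⟨y, hy1, hy2⟩ := SetLike.not_le_iff_exists.mp hne
    have hyI : y ∈ I := by
      have : I * Submodule.map (Algebra.linearMap O K) (s.prod id) ≤ I := by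
        calc I * Submodule.map (Algebra.linearMap O K) (s.prod id)
            ≤ I * 1 := mul_le_mul_right (map_le_one' _) _
          _ = I := Submodule.mul_one I
      exact this hy1
    have hys : ∀ m ∈ s, y ∈ I * Submodule.map (Algebra.linearMap O K) m := by
      intro m hm
      refine mul_le_mul_right (Submodule.map_mono ?_) _ hy1
      exact le_trans Ideal.prod_le_inf (Finset.inf_le hm)
    by_cases hxm : x ∈ I * Submodule.map (Algebra.linearMap O K) m'
    · refine ⟨x + y, I.add_mem hxI hyI, ?_⟩
      intro m hm
      rcases Finset.mem_insert.mp hm with rfl | hm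
      · intro h
        exact hy2 (by simpa using Submodule.sub_mem _ h hxm)
      · intro h
        exact hx m hm (by simpa using Submodule.sub_mem _ h (hys m hm))
    · refine ⟨x, hxI, ?_⟩
      intro m hm
      rcases Finset.mem_insert.mp hm with rfl | hm
      · exact hxm
      · exact hx m hm

/-- Key step: there is `x ∈ I` with `span {x} ⊔ I * d = I`. -/
private lemma key (I J : Submodule O K) (hIJ : I * J = 1) (d : Ideal O)
    (hfin : {m : Ideal O | m.IsMaximal ∧ d ≤ m}.Finite) :
    ∃ x ∈ I, Submodule.span O {x} ⊔ I * Submodule.map (Algebra.linearMap O K) d = I := by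
  classical
  set F := Algebra.linearMap O K with hF
  set s : Finset (Ideal O) := hfin.toFinset with hs
  obtain ⟨x, hxI, hx⟩ := avoid I J hIJ s fun m hm => (hfin.mem_toFinset.mp hm).1
  set D := Submodule.map F d with hD
  set C := Submodule.span O {x} ⊔ I * D with hC
  have hCI : C ≤ I := by
    refine sup_le ((Submodule.span_singleton_le_iff_mem _ _).mpr hxI) ?_
    calc I * D ≤ I * 1 := mul_le_mul_right (map_le_one' d) _
      _ = I := Submodule.mul_one I
  have hJC_le : J * C ≤ LinearMap.range F := by
    calc J * C ≤ J * I := mul_le_mul_right hCI _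
      _ = 1 := (Submodule.mul_comm J I).trans hIJ
      _ = LinearMap.range F := Submodule.one_eq_range
  set c : Ideal O := Submodule.comap F (J * C) with hc
  have hmapc : Submodule.map F c = J * C := by
    rw [hc, Submodule.map_comap_eq, inf_eq_right.mpr hJC_le]
  by_cases hctop : c = ⊤
  · refine ⟨x, hxI, ?_⟩
    have h1 : J * C = 1 := by
      rw [← hmapc, hctop, Submodule.map_top, ← Submodule.one_eq_range]
    calc C = C * 1 := (Submodule.mul_one C).symm
      _ = C * (J * I) := by rw [mul_comm J I, hIJ]
      _ = (J * C) * I := by ring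
      _ = 1 * I := by rw [h1]
      _ = I := Submodule.one_mul I
  · obtain ⟨m, hmmax, hcm⟩ := Ideal.exists_le_maximal c hctop
    exfalso
    have hdc : d ≤ c := by
      rw [hc, ← Submodule.map_le_iff_le_comap]
      calc Submodule.map F d = D := rfl
        _ = 1 * D := (Submodule.one_mul D).symm
        _ = (J * I) * D := by rw [mul_comm J I, hIJ]
        _ = J * (I * D) := mul_assoc _ _ _
        _ ≤ J * C := mul_le_mul_right le_sup_right _
    have hms : m ∈ s := hfin.mem_toFinset.mpr ⟨hmmax, le_trans hdc hcm⟩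
    apply hx m hms
    have h1mem : (1 : K) ∈ J * I := by
      rw [Submodule.mul_comm J I, hIJ]; exact Submodule.one_le.mp le_rfl
    have hxmem : x * 1 ∈ C * (J * I) :=
      Submodule.mul_mem_mul (le_sup_left (a := Submodule.span O {x})
        ((Submodule.mem_span_singleton_self x))) h1mem
    rw [mul_one] at hxmem
    have : C * (J * I) ≤ I * Submodule.map F m := by
      calc C * (J * I) = I * (J * C) := by ring
        _ = I * Submodule.map F c := by rw [hmapc]
        _ ≤ I * Submodule.map F m := mul_le_mul_right (Submodule.map_mono hcm) _
    exact this hxmem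

end Aux

/-- **Quotients of invertible fractional ideals of orders.** If `𝒪` is an order in a number
field `K`, `𝔠` an invertible fractional ideal of `𝒪` and `𝔡 ⊆ 𝒪` a nonzero ideal, then
`𝔠/(𝔠·𝔡)` is isomorphic to `𝒪/𝔡` as an `𝒪`-module; in particular it is generated by a
single element. -/
theorem invertible_ideal_quotient_iso
    (K : Type*) [Field K] [NumberField K]
    (O : Subalgebra ℤ K) (hfree : Module.Free ℤ O)
    (hrank : Module.finrank ℤ O = Module.finrank ℚ K)
    (I : Submodule O K) (hinv : ∃ J : Submodule O K, I * J = 1)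
    (d : Ideal O) (hd : d ≠ ⊥) :
    Nonempty
      ((↥I ⧸ Submodule.comap I.subtype (I * Submodule.map (Algebra.linearMap O K) d))
        ≃ₗ[O] (O ⧸ d)) ∧
    ∃ g : ↥I ⧸ Submodule.comap I.subtype (I * Submodule.map (Algebra.linearMap O K) d),
      Submodule.span O {g} = ⊤ := by
  classical
  obtain ⟨J, hIJ⟩ := hinv
  haveI : Module.Free ℤ O := hfree
  haveI : Module.Finite ℤ O := by
    apply Module.finite_of_finrank_pos
    rw [hrank]
    exact Module.finrank_pos
  haveI : Fintype (O ⧸ d) := @Fintype.ofFinite _ (Ideal.finiteQuotientOfFreeOfNeBot d hd)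
  haveI : Finite (Ideal (O ⧸ d)) :=
    Finite.of_injective (fun i => (i : Set (O ⧸ d))) SetLike.coe_injective
  have hfin : {m : Ideal O | m.IsMaximal ∧ d ≤ m}.Finite := by
    apply Set.Finite.of_finite_image (f := Ideal.map (Ideal.Quotient.mk d)) (Set.toFinite _)
    intro m₁ hm₁ m₂ hm₂ h
    have e : ∀ m : Ideal O, d ≤ m →
        Ideal.comap (Ideal.Quotient.mk d) (Ideal.map (Ideal.Quotient.mk d) m) = m := by
      intro m hm
      rw [Ideal.comap_map_of_surjective _ Ideal.Quotient.mk_surjective,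
        ← RingHom.ker_eq_comap_bot, Ideal.mk_ker, sup_eq_left.mpr hm]
    rw [← e m₁ hm₁.2, ← e m₂ hm₂.2, h]
  obtain ⟨x, hxI, hCeq⟩ := key I J hIJ d hfin
  set F := Algebra.linearMap O K with hF
  set D := Submodule.map F d with hD
  set N := Submodule.comap I.subtype (I * D) with hN
  set φ : O →ₗ[O] (↥I ⧸ N) := N.mkQ ∘ₗ LinearMap.toSpanSingleton O (↥I) ⟨x, hxI⟩ with hφ
  have hφapp : ∀ a : O, φ a = N.mkQ (a • (⟨x, hxI⟩ : I)) := fun a => rfl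
  -- kernel of φ is d
  have h1 : (1 : Submodule O K) = J * Submodule.span O {x} ⊔ D := by
    calc (1 : Submodule O K) = J * I := ((Submodule.mul_comm J I).trans hIJ).symm
      _ = J * (Submodule.span O {x} ⊔ I * D) := by rw [hCeq]
      _ = J * Submodule.span O {x} ⊔ J * (I * D) := Submodule.mul_sup _ _ _
      _ = J * Submodule.span O {x} ⊔ D := by
          rw [← mul_assoc, mul_comm J I, hIJ, Submodule.one_mul]
  have hker : LinearMap.ker φ = d := by
    ext a
    have hmem : a ∈ LinearMap.ker φ ↔ (a • x : K) ∈ I * D := by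
      rw [LinearMap.mem_ker, hφapp, Submodule.mkQ_apply, Submodule.Quotient.mk_eq_zero, hN,
        Submodule.mem_comap]
      exact Iff.rfl
    rw [hmem]
    constructor
    · intro hax
      have hspan : Submodule.span O {(algebraMap O K) a} ≤ D := by
        have step1 : Submodule.span O {(algebraMap O K) a} * (J * Submodule.span O {x}) ≤ D := by
          have e1 : Submodule.span O {(algebraMap O K) a} * (J * Submodule.span O {x})
              = J * (Submodule.span O {(algebraMap O K) a} * Submodule.span O {x}) := by ring
          have e2 : Submodule.span O {(algebraMap O K) a} * Submodule.span O {x}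
              = Submodule.span O {(a • x : K)} := by
            rw [Submodule.span_mul_span, Set.singleton_mul_singleton, Algebra.smul_def]
          rw [e1, e2]
          calc J * Submodule.span O {(a • x : K)} ≤ J * (I * D) :=
                mul_le_mul_right
                  ((Submodule.span_singleton_le_iff_mem _ _).mpr hax) _
            _ = D := by rw [← mul_assoc, mul_comm J I, hIJ, Submodule.one_mul]
        have step2 : Submodule.span O {(algebraMap O K) a} * D ≤ D := by
          calc Submodule.span O {(algebraMap O K) a} * D ≤ 1 * D :=
                mul_le_mul_left
                  ((Submodule.span_singleton_le_iff_mem _ _).mpr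
                    (Submodule.algebraMap_mem a)) _
            _ = D := Submodule.one_mul D
        calc Submodule.span O {(algebraMap O K) a}
            = Submodule.span O {(algebraMap O K) a} * 1 := (Submodule.mul_one _).symm
          _ = Submodule.span O {(algebraMap O K) a} * (J * Submodule.span O {x})
                ⊔ Submodule.span O {(algebraMap O K) a} * D := by
              rw [h1, Submodule.mul_sup]
          _ ≤ D := sup_le step1 step2
      have hαD : (algebraMap O K) a ∈ D :=
        hspan (Submodule.mem_span_singleton_self _)
      obtain ⟨b, hb, hba⟩ := hαD
      have : b = a := Subtype.val_injective hba
      exact this ▸ hb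
    · intro had
      have : (a • x : K) = x * (algebraMap O K) a := by
        rw [Algebra.smul_def, mul_comm]
      rw [this]
      exact Submodule.mul_mem_mul hxI ⟨a, had, rfl⟩
  -- surjectivity of φ
  have hsurj : Function.Surjective φ := by
    intro z
    obtain ⟨⟨y, hyI⟩, rfl⟩ := Submodule.Quotient.mk_surjective N z
    have hy' : y ∈ Submodule.span O {x} ⊔ I * D := by rw [hCeq]; exact hyI
    obtain ⟨u, hu, w, hw, huw⟩ := Submodule.mem_sup.mp hy'
    obtain ⟨cc, hcc⟩ := Submodule.mem_span_singleton.mp hu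
    refine ⟨cc, ?_⟩
    rw [hφapp]
    refine (Submodule.Quotient.eq N).mpr ?_
    rw [hN, Submodule.mem_comap]
    have : (I.subtype) (cc • (⟨x, hxI⟩ : I) - ⟨y, hyI⟩) = cc • x - y := rfl
    rw [this, hcc, ← huw]
    simpa using Submodule.neg_mem _ hw
  constructor
  · exact ⟨((Submodule.quotEquivOfEq d (LinearMap.ker φ) hker.symm).trans
      (φ.quotKerEquivOfSurjective hsurj)).symm⟩
  · refine ⟨N.mkQ ⟨x, hxI⟩, ?_⟩
    rw [eq_top_iff]
    rintro z -
    obtain ⟨cz, rfl⟩ := hsurj z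
    have : φ cz = cz • N.mkQ ⟨x, hxI⟩ := by
      rw [hφapp, map_smul]
    rw [this]
    exact Submodule.smul_mem _ cz (Submodule.mem_span_singleton_self _)
end
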